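/- arXiv:2311.06768 — 5 statements merged into one kernel-verified Lean document; each statement's English description precedes it below -/
import Mathlib

section
/- Let $K:\mathbb{R}^3\times\mathbb{R}^3\to\mathbb{C}$ satisfy $|K(x,y)|\lesssim \langle x\rangle^{-1}\langle y\rangle^{-1}\langle |x|-|y|\rangle^{-2}$, and let $K_1(x,y)=K(x,y)\chi_{\{\frac12|x|\le |y|\le 2|x|\}}$. Then $\sup_x \int |K_1(x,y)|\,dy + \sup_y \int |K_1(x,y)|\,dx < \infty$; in particular $T_{K_1}$ is bounded on $L^p(\mathbb{R}^3)$ for all $1\le p\le \infty$. -/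
open MeasureTheory Real
open scoped ENNReal NNReal

noncomputable section

abbrev E3 := EuclideanSpace ℝ (Fin 3)

/-- Japanese bracket `⟨x⟩ = (1+|x|²)^{1/2}` of a point of `ℝ³`. -/
def jb (x : E3) : ℝ := Real.sqrt (1 + ‖x‖ ^ 2)

/-- Japanese bracket of a real number. -/
def jbR (s : ℝ) : ℝ := Real.sqrt (1 + s ^ 2)

lemma jb_eq (x : E3) : jb x = jbR ‖x‖ := rfl

lemma jbR_pos (s : ℝ) : 0 < jbR s := Real.sqrt_pos.2 (by positivity)

lemma jbR_sq (s : ℝ) : jbR s ^ 2 = 1 + s ^ 2 := Real.sq_sqrt (by positivity)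

/-- Cut-off Cauchy-type profile. -/
def gR (a r : ℝ) : ℝ := if r ≤ 2 * a then (1 + (a - r) ^ 2)⁻¹ else 0

lemma gR_nonneg (a r : ℝ) : 0 ≤ gR a r := by
  unfold gR; split_ifs <;> positivity

lemma gR_meas (a : ℝ) : Measurable (gR a) := by
  unfold gR
  exact Measurable.ite (measurableSet_le measurable_id measurable_const)
    (by fun_prop) measurable_const

lemma helper (C' : ℝ) (hC' : 0 ≤ C') (s t d : ℝ) (hs : 0 ≤ s) (ht : 0 ≤ t)
    (hts : t ≤ 2 * s) :
    C' * (jbR t)⁻¹ * (jbR s)⁻¹ * ((jbR d) ^ 2)⁻¹ ≤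
      2 * C' * (1 + t ^ 2)⁻¹ * (1 + d ^ 2)⁻¹ := by
  have h4 : Real.sqrt 4 = 2 := by
    rw [show (4 : ℝ) = 2 ^ 2 by norm_num, Real.sqrt_sq (by norm_num)]
  have h1 : jbR t ≤ 2 * jbR s := by
    have : jbR t ≤ Real.sqrt (4 * (1 + s ^ 2)) := by
      apply Real.sqrt_le_sqrt; nlinarith
    rwa [Real.sqrt_mul (by norm_num), h4] at this
  have h2 : (jbR s)⁻¹ ≤ 2 * (jbR t)⁻¹ := by
    have hpos : 0 < jbR t / 2 := by have := jbR_pos t; linarith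
    calc (jbR s)⁻¹ ≤ (jbR t / 2)⁻¹ := by
          apply inv_anti₀ hpos; linarith
      _ = 2 * (jbR t)⁻¹ := by rw [inv_div]; ring
  have hu : (0:ℝ) ≤ (jbR t)⁻¹ := inv_nonneg.2 (jbR_pos t).le
  have hw : (0:ℝ) ≤ ((jbR d) ^ 2)⁻¹ := inv_nonneg.2 (sq_nonneg _)
  calc C' * (jbR t)⁻¹ * (jbR s)⁻¹ * ((jbR d) ^ 2)⁻¹
      ≤ C' * (jbR t)⁻¹ * (2 * (jbR t)⁻¹) * ((jbR d) ^ 2)⁻¹ := by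
        have hC'u : 0 ≤ C' * (jbR t)⁻¹ := mul_nonneg hC' hu
        exact mul_le_mul_of_nonneg_right (mul_le_mul_of_nonneg_left h2 hC'u) hw
    _ = 2 * C' * ((jbR t) ^ 2)⁻¹ * ((jbR d) ^ 2)⁻¹ := by
        rw [sq (jbR t), mul_inv]; ring
    _ = 2 * C' * (1 + t ^ 2)⁻¹ * (1 + d ^ 2)⁻¹ := by rw [jbR_sq, jbR_sq]

lemma lintegral_norm_E3 (h : ℝ → ℝ≥0∞) (hh : Measurable h) :
    ∫⁻ x : E3, h ‖x‖ =
      (volume : Measure E3).toSphere Set.univ *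
        ∫⁻ r in Set.Ioi (0:ℝ), ENNReal.ofReal (r ^ 2) * h r := by
  have hdim : Module.finrank ℝ E3 = 3 := finrank_euclideanSpace_fin
  have step1 : ∫⁻ x : E3, h ‖x‖ =
      ∫⁻ x : ({(0:E3)}ᶜ : Set E3), h ‖(x : E3)‖
        ∂((volume : Measure E3).comap Subtype.val) := by
    have e1 := lintegral_subtype_comap (μ := (volume : Measure E3))
      (measurableSet_singleton (0:E3)).compl (fun x => h ‖x‖)
    rw [e1, restrict_compl_singleton]
  have hmeas2 : Measurable fun p : Metric.sphere (0:E3) 1 × Set.Ioi (0:ℝ) => h p.2 :=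
    hh.comp (measurable_subtype_coe.comp measurable_snd)
  have step2 := (Measure.measurePreserving_homeomorphUnitSphereProd
      (volume : Measure E3)).lintegral_comp hmeas2
  simp only [homeomorphUnitSphereProd_apply_snd_coe] at step2
  have step3 : ∫⁻ p : Metric.sphere (0:E3) 1 × Set.Ioi (0:ℝ), h p.2
      ∂((volume : Measure E3).toSphere.prod
        (Measure.volumeIoiPow (Module.finrank ℝ E3 - 1))) =
      (volume : Measure E3).toSphere Set.univ *
        ∫⁻ r : Set.Ioi (0:ℝ), h r ∂(Measure.volumeIoiPow (Module.finrank ℝ E3 - 1)) := by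
    rw [lintegral_prod _ hmeas2.aemeasurable]
    simp [lintegral_const, mul_comm]
  have step4 : ∫⁻ r : Set.Ioi (0:ℝ), h r
      ∂(Measure.volumeIoiPow (Module.finrank ℝ E3 - 1)) =
      ∫⁻ r in Set.Ioi (0:ℝ), ENNReal.ofReal (r ^ 2) * h r := by
    rw [hdim]
    show ∫⁻ r : Set.Ioi (0:ℝ), h r ∂(Measure.volumeIoiPow 2) = _
    have e4 : ∫⁻ r : Set.Ioi (0:ℝ), h ↑r ∂(Measure.volumeIoiPow 2) =
        ∫⁻ r : Set.Ioi (0:ℝ), ENNReal.ofReal ((r:ℝ) ^ 2) * h ↑r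
          ∂((volume : Measure ℝ).comap Subtype.val) :=
      lintegral_withDensity_eq_lintegral_mul _
        (by fun_prop : Measurable fun r : Set.Ioi (0:ℝ) => ENNReal.ofReal ((r:ℝ) ^ 2))
        (hh.comp measurable_subtype_coe)
    have e5 := lintegral_subtype_comap (μ := (volume : Measure ℝ)) (measurableSet_Ioi (a := (0:ℝ)))
      (fun r : ℝ => ENNReal.ofReal (r ^ 2) * h r)
    exact e4.trans e5
  rw [step1, step2, step3, step4]

lemma cauchy_lintegral (a : ℝ) :
    ∫⁻ r : ℝ, ENNReal.ofReal ((1 + (a - r) ^ 2)⁻¹) = ENNReal.ofReal π := by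
  have hInt : Integrable (fun r : ℝ => (1 + (a - r) ^ 2)⁻¹) := by
    have := integrable_inv_one_add_sq.comp_sub_left a
    simpa using this
  rw [← ofReal_integral_eq_lintegral_ofReal hInt
    (Filter.Eventually.of_forall fun r => by positivity)]
  congr 1
  have := integral_sub_left_eq_self (fun s : ℝ => (1 + s ^ 2)⁻¹) (volume : Measure ℝ) a
  rw [this, integral_univ_inv_one_add_sq]

lemma shell_lintegral_bound (c a : ℝ) (hc : 0 ≤ c) :
    ∫⁻ z : E3, ENNReal.ofReal (c * (1 + a ^ 2)⁻¹ * gR a ‖z‖)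
      ≤ (volume : Measure E3).toSphere Set.univ * ENNReal.ofReal (4 * c * π) := by
  have hm : Measurable fun r : ℝ => ENNReal.ofReal (c * (1 + a ^ 2)⁻¹ * gR a r) :=
    (((gR_meas a).const_mul _)).ennreal_ofReal
  rw [lintegral_norm_E3 _ hm]
  apply mul_le_mul_right
  calc ∫⁻ r in Set.Ioi (0:ℝ), ENNReal.ofReal (r ^ 2) *
          ENNReal.ofReal (c * (1 + a ^ 2)⁻¹ * gR a r)
      ≤ ∫⁻ r in Set.Ioi (0:ℝ), ENNReal.ofReal (4 * c * (1 + a ^ 2)⁻¹ * a ^ 2) *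
          ENNReal.ofReal ((1 + (a - r) ^ 2)⁻¹) := by
        apply setLIntegral_mono (by fun_prop)
        intro r hr
        have hr0 : (0:ℝ) < r := hr
        unfold gR
        split_ifs with hcut
        · have hra : r ^ 2 ≤ 4 * a ^ 2 := by nlinarith
          rw [← ENNReal.ofReal_mul (by positivity), ← ENNReal.ofReal_mul (by positivity)]
          apply ENNReal.ofReal_le_ofReal
          have h1 : (0:ℝ) ≤ (1 + (a - r) ^ 2)⁻¹ := by positivity
          calc r ^ 2 * (c * (1 + a ^ 2)⁻¹ * (1 + (a - r) ^ 2)⁻¹)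
              ≤ 4 * a ^ 2 * (c * (1 + a ^ 2)⁻¹ * (1 + (a - r) ^ 2)⁻¹) := by
                apply mul_le_mul_of_nonneg_right hra (by positivity)
            _ = 4 * c * (1 + a ^ 2)⁻¹ * a ^ 2 * (1 + (a - r) ^ 2)⁻¹ := by ring
        · simp
    _ ≤ ∫⁻ r : ℝ, ENNReal.ofReal (4 * c * (1 + a ^ 2)⁻¹ * a ^ 2) *
          ENNReal.ofReal ((1 + (a - r) ^ 2)⁻¹) := setLIntegral_le_lintegral _ _
    _ = ENNReal.ofReal (4 * c * (1 + a ^ 2)⁻¹ * a ^ 2) * ENNReal.ofReal π := by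
        rw [lintegral_const_mul _ (by fun_prop), cauchy_lintegral]
    _ ≤ ENNReal.ofReal (4 * c * π) := by
        rw [← ENNReal.ofReal_mul (by positivity)]
        apply ENNReal.ofReal_le_ofReal
        have h2 : (1 + a ^ 2)⁻¹ * a ^ 2 ≤ 1 := by
          rw [inv_mul_le_iff₀ (by positivity)]; nlinarith
        calc 4 * c * (1 + a ^ 2)⁻¹ * a ^ 2 * π = 4 * c * π * ((1 + a ^ 2)⁻¹ * a ^ 2) := by ring
          _ ≤ 4 * c * π * 1 := by
              apply mul_le_mul_of_nonneg_left h2 (by positivity)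
          _ = 4 * c * π := mul_one _

lemma rpow_one_div_rpow (x : ℝ≥0∞) {t : ℝ} (ht : t ≠ 0) : (x ^ (1/t)) ^ t = x := by
  rw [← ENNReal.rpow_mul, one_div, inv_mul_cancel₀ ht, ENNReal.rpow_one]

/-- If `|K(x,y)| ≲ ⟨x⟩⁻¹⟨y⟩⁻¹⟨|x|-|y|⟩⁻²` and `K₁` is the restriction of `K` to the region
`½|x| ≤ |y| ≤ 2|x|`, then `K₁` is admissible; in particular `T_{K₁}` is bounded on `L^p(ℝ³)`
for all `1 ≤ p ≤ ∞`. -/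
theorem kernel_diagonal_piece_admissible (K : E3 → E3 → ℂ)
    (hmeas : Measurable (Function.uncurry K))
    (hK : ∃ C : ℝ, ∀ x y : E3, ‖K x y‖ ≤ C * (jb x)⁻¹ * (jb y)⁻¹ * ((jbR (‖x‖ - ‖y‖)) ^ 2)⁻¹)
    (K₁ : E3 → E3 → ℂ)
    (hK₁ : ∀ x y : E3, K₁ x y = if (1 / 2) * ‖x‖ ≤ ‖y‖ ∧ ‖y‖ ≤ 2 * ‖x‖ then K x y else 0) :
    (∃ M : ℝ, (∀ x : E3, (∫ y : E3, ‖K₁ x y‖) ≤ M) ∧ (∀ y : E3, (∫ x : E3, ‖K₁ x y‖) ≤ M)) ∧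
    (∀ p : ℝ≥0∞, 1 ≤ p → ∃ C : ℝ≥0, ∀ f : E3 → ℂ, MemLp f p volume →
      eLpNorm (fun x : E3 => ∫ y : E3, K₁ x y * f y) p volume ≤ C * eLpNorm f p volume) := by
  classical
  obtain ⟨C, hC⟩ := hK
  set C' : ℝ := max C 0 with hC'def
  have hC'0 : (0:ℝ) ≤ C' := le_max_right _ _
  -- upgraded kernel bound with nonnegative constant
  have hK' : ∀ x y : E3, ‖K x y‖ ≤
      C' * (jbR ‖x‖)⁻¹ * (jbR ‖y‖)⁻¹ * ((jbR (‖x‖ - ‖y‖)) ^ 2)⁻¹ := by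
    intro x y
    have h := hC x y
    rw [jb_eq, jb_eq] at h
    refine h.trans ?_
    have hA : (0:ℝ) ≤ (jbR ‖x‖)⁻¹ := inv_nonneg.2 (jbR_pos _).le
    have hB : (0:ℝ) ≤ (jbR ‖y‖)⁻¹ := inv_nonneg.2 (jbR_pos _).le
    have hD : (0:ℝ) ≤ ((jbR (‖x‖ - ‖y‖)) ^ 2)⁻¹ := inv_nonneg.2 (sq_nonneg _)
    have hP : (0:ℝ) ≤ (jbR ‖x‖)⁻¹ * (jbR ‖y‖)⁻¹ * ((jbR (‖x‖ - ‖y‖)) ^ 2)⁻¹ :=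
      mul_nonneg (mul_nonneg hA hB) hD
    calc C * (jbR ‖x‖)⁻¹ * (jbR ‖y‖)⁻¹ * ((jbR (‖x‖ - ‖y‖)) ^ 2)⁻¹
        = C * ((jbR ‖x‖)⁻¹ * (jbR ‖y‖)⁻¹ * ((jbR (‖x‖ - ‖y‖)) ^ 2)⁻¹) := by ring
      _ ≤ C' * ((jbR ‖x‖)⁻¹ * (jbR ‖y‖)⁻¹ * ((jbR (‖x‖ - ‖y‖)) ^ 2)⁻¹) :=
          mul_le_mul_of_nonneg_right (le_max_left C 0) hP
      _ = C' * (jbR ‖x‖)⁻¹ * (jbR ‖y‖)⁻¹ * ((jbR (‖x‖ - ‖y‖)) ^ 2)⁻¹ := by ring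
  -- pointwise bounds on K₁
  have hpt1 : ∀ x y : E3, ‖K₁ x y‖ ≤ 2 * C' * (1 + ‖x‖ ^ 2)⁻¹ * gR ‖x‖ ‖y‖ := by
    intro x y
    rw [hK₁]
    split_ifs with h
    · obtain ⟨hlo, hhi⟩ := h
      have hgr : gR ‖x‖ ‖y‖ = (1 + (‖x‖ - ‖y‖) ^ 2)⁻¹ := if_pos hhi
      rw [hgr]
      exact (hK' x y).trans (helper C' hC'0 ‖y‖ ‖x‖ (‖x‖ - ‖y‖)
        (norm_nonneg _) (norm_nonneg _) (by linarith))
    · simp only [norm_zero]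
      have := gR_nonneg ‖x‖ ‖y‖
      positivity
  have hpt2 : ∀ x y : E3, ‖K₁ x y‖ ≤ 2 * C' * (1 + ‖y‖ ^ 2)⁻¹ * gR ‖y‖ ‖x‖ := by
    intro x y
    rw [hK₁]
    split_ifs with h
    · obtain ⟨hlo, hhi⟩ := h
      have hgr : gR ‖y‖ ‖x‖ = (1 + (‖y‖ - ‖x‖) ^ 2)⁻¹ := if_pos (by linarith)
      have hsq : (‖y‖ - ‖x‖) ^ 2 = (‖x‖ - ‖y‖) ^ 2 := by ring
      rw [hgr, hsq]
      refine le_trans ?_ (helper C' hC'0 ‖x‖ ‖y‖ (‖x‖ - ‖y‖)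
        (norm_nonneg _) (norm_nonneg _) (by linarith))
      calc ‖K x y‖ ≤ C' * (jbR ‖x‖)⁻¹ * (jbR ‖y‖)⁻¹ * ((jbR (‖x‖ - ‖y‖)) ^ 2)⁻¹ := hK' x y
        _ = C' * (jbR ‖y‖)⁻¹ * (jbR ‖x‖)⁻¹ * ((jbR (‖x‖ - ‖y‖)) ^ 2)⁻¹ := by ring
    · simp only [norm_zero]
      have := gR_nonneg ‖y‖ ‖x‖
      positivity
  -- measurability of K₁
  have hK₁m : Measurable (Function.uncurry K₁) := by
    have hrepr : Function.uncurry K₁ = fun p : E3 × E3 =>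
        if (1 / 2) * ‖p.1‖ ≤ ‖p.2‖ ∧ ‖p.2‖ ≤ 2 * ‖p.1‖ then Function.uncurry K p else 0 :=
      funext fun p => hK₁ p.1 p.2
    rw [hrepr]
    have hs : MeasurableSet {p : E3 × E3 | (1 / 2) * ‖p.1‖ ≤ ‖p.2‖ ∧ ‖p.2‖ ≤ 2 * ‖p.1‖} := by
      rw [Set.setOf_and]
      exact (measurableSet_le (by fun_prop) (by fun_prop)).inter
        (measurableSet_le (by fun_prop) (by fun_prop))
    exact Measurable.ite hs hmeas measurable_const
  set S : ℝ≥0∞ := (volume : Measure E3).toSphere Set.univ with hSdef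
  set Me : ℝ≥0∞ := S * ENNReal.ofReal (4 * (2 * C') * π) with hMedef
  have hMetop : Me ≠ ∞ := ENNReal.mul_ne_top (measure_ne_top _ _) ENNReal.ofReal_ne_top
  have hrow : ∀ x : E3, ∫⁻ y : E3, (‖K₁ x y‖₊ : ℝ≥0∞) ≤ Me := by
    intro x
    calc ∫⁻ y : E3, (‖K₁ x y‖₊ : ℝ≥0∞)
        ≤ ∫⁻ y : E3, ENNReal.ofReal (2 * C' * (1 + ‖x‖ ^ 2)⁻¹ * gR ‖x‖ ‖y‖) := by
          apply lintegral_mono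
          intro y
          show (‖K₁ x y‖₊ : ℝ≥0∞) ≤ _
          rw [← enorm_eq_nnnorm, ← ofReal_norm]
          exact ENNReal.ofReal_le_ofReal (hpt1 x y)
      _ ≤ Me := shell_lintegral_bound (2 * C') ‖x‖ (by positivity)
  have hcol : ∀ y : E3, ∫⁻ x : E3, (‖K₁ x y‖₊ : ℝ≥0∞) ≤ Me := by
    intro y
    calc ∫⁻ x : E3, (‖K₁ x y‖₊ : ℝ≥0∞)
        ≤ ∫⁻ x : E3, ENNReal.ofReal (2 * C' * (1 + ‖y‖ ^ 2)⁻¹ * gR ‖y‖ ‖x‖) := by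
          apply lintegral_mono
          intro x
          show (‖K₁ x y‖₊ : ℝ≥0∞) ≤ _
          rw [← enorm_eq_nnnorm, ← ofReal_norm]
          exact ENNReal.ofReal_le_ofReal (hpt2 x y)
      _ ≤ Me := shell_lintegral_bound (2 * C') ‖y‖ (by positivity)
  constructor
  · -- part 1
    refine ⟨Me.toReal, fun x => ?_, fun y => ?_⟩
    · have hm : AEStronglyMeasurable (fun y => K₁ x y) volume :=
        (hK₁m.of_uncurry_left).aestronglyMeasurable
      rw [integral_eq_lintegral_of_nonneg_ae (ae_of_all _ fun y => norm_nonneg _) hm.norm]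
      apply ENNReal.toReal_mono hMetop
      calc ∫⁻ y : E3, ENNReal.ofReal ‖K₁ x y‖ = ∫⁻ y : E3, (‖K₁ x y‖₊ : ℝ≥0∞) := by
            simp_rw [ofReal_norm, enorm_eq_nnnorm]
        _ ≤ Me := hrow x
    · have hm : AEStronglyMeasurable (fun x => K₁ x y) volume :=
        (hK₁m.of_uncurry_right).aestronglyMeasurable
      rw [integral_eq_lintegral_of_nonneg_ae (ae_of_all _ fun x => norm_nonneg _) hm.norm]
      apply ENNReal.toReal_mono hMetop
      calc ∫⁻ x : E3, ENNReal.ofReal ‖K₁ x y‖ = ∫⁻ x : E3, (‖K₁ x y‖₊ : ℝ≥0∞) := by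
            simp_rw [ofReal_norm, enorm_eq_nnnorm]
        _ ≤ Me := hcol y
  · -- part 2: L^p boundedness
    intro p hp
    refine ⟨Me.toNNReal, fun f hf => ?_⟩
    have hg : AEMeasurable (fun y : E3 => (‖f y‖₊ : ℝ≥0∞)) volume :=
      hf.aestronglyMeasurable.enorm
    have hcoe : (Me.toNNReal : ℝ≥0∞) = Me := ENNReal.coe_toNNReal hMetop
    rw [hcoe]
    have hTf : ∀ x : E3, (‖∫ y : E3, K₁ x y * f y‖₊ : ℝ≥0∞) ≤
        ∫⁻ y : E3, (‖K₁ x y‖₊ : ℝ≥0∞) * (‖f y‖₊ : ℝ≥0∞) := by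
      intro x
      calc (‖∫ y : E3, K₁ x y * f y‖₊ : ℝ≥0∞)
          ≤ ∫⁻ y : E3, (‖K₁ x y * f y‖₊ : ℝ≥0∞) := enorm_integral_le_lintegral_enorm _
        _ = ∫⁻ y : E3, (‖K₁ x y‖₊ : ℝ≥0∞) * (‖f y‖₊ : ℝ≥0∞) := by
            simp_rw [nnnorm_mul, ENNReal.coe_mul]
    by_cases hptop : p = ∞
    · subst hptop
      rw [eLpNorm_exponent_top, eLpNorm_exponent_top]
      have hbound : ∀ x : E3, (‖∫ y : E3, K₁ x y * f y‖₊ : ℝ≥0∞) ≤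
          Me * eLpNormEssSup f volume := by
        intro x
        refine (hTf x).trans ?_
        calc ∫⁻ y : E3, (‖K₁ x y‖₊ : ℝ≥0∞) * (‖f y‖₊ : ℝ≥0∞)
            ≤ ∫⁻ y : E3, (‖K₁ x y‖₊ : ℝ≥0∞) * eLpNormEssSup f volume := by
              refine lintegral_mono_ae ?_
              filter_upwards [ae_le_eLpNormEssSup (f := f) (μ := volume)] with y hy
              exact mul_le_mul_right hy _
          _ = (∫⁻ y : E3, (‖K₁ x y‖₊ : ℝ≥0∞)) * eLpNormEssSup f volume :=
              lintegral_mul_const _ (hK₁m.of_uncurry_left.enorm)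
          _ ≤ Me * eLpNormEssSup f volume := mul_le_mul_left (hrow x) _
      exact essSup_le_of_ae_le _ (ae_of_all _ hbound)
    have hp0 : p ≠ 0 := (lt_of_lt_of_le zero_lt_one hp).ne'
    by_cases hp1 : p = 1
    · subst hp1
      rw [eLpNorm_one_eq_lintegral_enorm, eLpNorm_one_eq_lintegral_enorm]
      calc ∫⁻ x : E3, (‖∫ y : E3, K₁ x y * f y‖₊ : ℝ≥0∞)
          ≤ ∫⁻ x : E3, ∫⁻ y : E3, (‖K₁ x y‖₊ : ℝ≥0∞) * (‖f y‖₊ : ℝ≥0∞) :=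
            lintegral_mono hTf
        _ = ∫⁻ y : E3, ∫⁻ x : E3, (‖K₁ x y‖₊ : ℝ≥0∞) * (‖f y‖₊ : ℝ≥0∞) :=
            lintegral_lintegral_swap ((hK₁m.enorm.aemeasurable).mul hg.comp_snd)
        _ = ∫⁻ y : E3, (∫⁻ x : E3, (‖K₁ x y‖₊ : ℝ≥0∞)) * (‖f y‖₊ : ℝ≥0∞) :=
            lintegral_congr fun y => lintegral_mul_const _ (hK₁m.of_uncurry_right.enorm)
        _ ≤ ∫⁻ y : E3, Me * (‖f y‖₊ : ℝ≥0∞) :=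
            lintegral_mono fun y => mul_le_mul_left (hcol y) _
        _ = Me * ∫⁻ y : E3, (‖f y‖₊ : ℝ≥0∞) := lintegral_const_mul' _ _ hMetop
    -- main case 1 < p < ∞
    have hpr_gt : 1 < p.toReal := by
      have := (ENNReal.toReal_lt_toReal (by simp) hptop).2 (lt_of_le_of_ne hp (Ne.symm hp1))
      simpa using this
    set pr := p.toReal with hprdef
    have hpr0 : 0 < pr := lt_trans one_pos hpr_gt
    have hpq : pr.HolderConjugate (Real.conjExponent pr) :=
      Real.HolderConjugate.conjExponent hpr_gt
    set qr := Real.conjExponent pr with hqrdef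
    have hqr0 : 0 < qr := hpq.symm.pos
    have hinv_sum : 1/qr + 1/pr = 1 := by
      have h := hpq.inv_add_inv_eq_one
      rw [one_div, one_div]
      linarith [h]
    have hksec : ∀ x : E3, Measurable (fun y => (‖K₁ x y‖₊ : ℝ≥0∞)) :=
      fun x => hK₁m.of_uncurry_left.enorm
    have key : ∀ x : E3, (∫⁻ y : E3, (‖K₁ x y‖₊ : ℝ≥0∞) * (‖f y‖₊ : ℝ≥0∞)) ≤
        Me ^ (1/qr) * (∫⁻ y : E3, (‖K₁ x y‖₊ : ℝ≥0∞) * (‖f y‖₊ : ℝ≥0∞) ^ pr) ^ (1/pr) := by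
      intro x
      have hsplit : ∀ y : E3, (‖K₁ x y‖₊ : ℝ≥0∞) * (‖f y‖₊ : ℝ≥0∞) =
          ((‖K₁ x y‖₊ : ℝ≥0∞) ^ (1/qr)) * ((‖K₁ x y‖₊ : ℝ≥0∞) ^ (1/pr) * (‖f y‖₊ : ℝ≥0∞)) := by
        intro y
        rw [← mul_assoc, ← ENNReal.rpow_add_of_nonneg _ _ (by positivity) (by positivity),
          hinv_sum, ENNReal.rpow_one]
      calc (∫⁻ y : E3, (‖K₁ x y‖₊ : ℝ≥0∞) * (‖f y‖₊ : ℝ≥0∞))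
          = ∫⁻ y : E3, ((‖K₁ x y‖₊ : ℝ≥0∞) ^ (1/qr)) *
              ((‖K₁ x y‖₊ : ℝ≥0∞) ^ (1/pr) * (‖f y‖₊ : ℝ≥0∞)) := lintegral_congr hsplit
        _ ≤ (∫⁻ y : E3, ((‖K₁ x y‖₊ : ℝ≥0∞) ^ (1/qr)) ^ qr) ^ (1/qr) *
              (∫⁻ y : E3, ((‖K₁ x y‖₊ : ℝ≥0∞) ^ (1/pr) * (‖f y‖₊ : ℝ≥0∞)) ^ pr) ^ (1/pr) :=
            ENNReal.lintegral_mul_le_Lp_mul_Lq volume hpq.symm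
              ((hksec x).pow_const _).aemeasurable
              (((hksec x).pow_const _).aemeasurable.mul hg)
        _ = (∫⁻ y : E3, (‖K₁ x y‖₊ : ℝ≥0∞)) ^ (1/qr) *
              (∫⁻ y : E3, (‖K₁ x y‖₊ : ℝ≥0∞) * (‖f y‖₊ : ℝ≥0∞) ^ pr) ^ (1/pr) := by
            congr 1
            · congr 1
              refine lintegral_congr fun y => ?_
              exact rpow_one_div_rpow _ hqr0.ne'
            · congr 1
              refine lintegral_congr fun y => ?_
              rw [ENNReal.mul_rpow_of_nonneg _ _ hpr0.le, rpow_one_div_rpow _ hpr0.ne']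
        _ ≤ Me ^ (1/qr) *
              (∫⁻ y : E3, (‖K₁ x y‖₊ : ℝ≥0∞) * (‖f y‖₊ : ℝ≥0∞) ^ pr) ^ (1/pr) :=
            mul_le_mul_left (ENNReal.rpow_le_rpow (hrow x) (by positivity)) _
    rw [eLpNorm_eq_lintegral_rpow_enorm_toReal hp0 hptop, eLpNorm_eq_lintegral_rpow_enorm_toReal hp0 hptop,
      ← hprdef]
    have hexp_ne_top : (Me ^ (1/qr)) ^ pr ≠ ∞ :=
      ENNReal.rpow_ne_top_of_nonneg hpr0.le
        (ENNReal.rpow_ne_top_of_nonneg (by positivity) hMetop)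
    have main : ∫⁻ x : E3, (‖∫ y : E3, K₁ x y * f y‖₊ : ℝ≥0∞) ^ pr ≤
        Me ^ pr * ∫⁻ y : E3, (‖f y‖₊ : ℝ≥0∞) ^ pr := by
      calc ∫⁻ x : E3, (‖∫ y : E3, K₁ x y * f y‖₊ : ℝ≥0∞) ^ pr
          ≤ ∫⁻ x : E3, (Me ^ (1/qr)) ^ pr *
              ∫⁻ y : E3, (‖K₁ x y‖₊ : ℝ≥0∞) * (‖f y‖₊ : ℝ≥0∞) ^ pr := by
            apply lintegral_mono
            intro x
            calc (‖∫ y : E3, K₁ x y * f y‖₊ : ℝ≥0∞) ^ pr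
                ≤ (Me ^ (1/qr) *
                    (∫⁻ y : E3, (‖K₁ x y‖₊ : ℝ≥0∞) * (‖f y‖₊ : ℝ≥0∞) ^ pr) ^ (1/pr)) ^ pr :=
                  ENNReal.rpow_le_rpow ((hTf x).trans (key x)) hpr0.le
              _ = (Me ^ (1/qr)) ^ pr *
                    ∫⁻ y : E3, (‖K₁ x y‖₊ : ℝ≥0∞) * (‖f y‖₊ : ℝ≥0∞) ^ pr := by
                  rw [ENNReal.mul_rpow_of_nonneg _ _ hpr0.le, rpow_one_div_rpow _ hpr0.ne']
        _ = (Me ^ (1/qr)) ^ pr *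
              ∫⁻ x : E3, ∫⁻ y : E3, (‖K₁ x y‖₊ : ℝ≥0∞) * (‖f y‖₊ : ℝ≥0∞) ^ pr :=
            lintegral_const_mul' _ _ hexp_ne_top
        _ = (Me ^ (1/qr)) ^ pr *
              ∫⁻ y : E3, (∫⁻ x : E3, (‖K₁ x y‖₊ : ℝ≥0∞)) * (‖f y‖₊ : ℝ≥0∞) ^ pr := by
            congr 1
            rw [lintegral_lintegral_swap ((hK₁m.enorm.aemeasurable).mul
              ((hg.pow_const pr).comp_snd))]
            exact lintegral_congr fun y =>
              lintegral_mul_const _ (hK₁m.of_uncurry_right.enorm)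
        _ ≤ (Me ^ (1/qr)) ^ pr * ∫⁻ y : E3, Me * (‖f y‖₊ : ℝ≥0∞) ^ pr := by
            apply mul_le_mul_right
            exact lintegral_mono fun y => mul_le_mul_left (hcol y) _
        _ = (Me ^ (1/qr)) ^ pr * Me * ∫⁻ y : E3, (‖f y‖₊ : ℝ≥0∞) ^ pr := by
            rw [lintegral_const_mul' _ _ hMetop, hMedef]; ring
        _ = Me ^ pr * ∫⁻ y : E3, (‖f y‖₊ : ℝ≥0∞) ^ pr := by
            congr 1
            rw [← ENNReal.rpow_mul]
            nth_rewrite 2 [← ENNReal.rpow_one Me]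
            rw [← ENNReal.rpow_add_of_nonneg _ _ (by positivity) zero_le_one]
            congr 1
            have h1 : 1/qr = 1 - 1/pr := by linarith [hinv_sum]
            rw [h1]
            field_simp
            ring
    calc (∫⁻ x : E3, (‖∫ y : E3, K₁ x y * f y‖₊ : ℝ≥0∞) ^ pr) ^ (1/pr)
        ≤ (Me ^ pr * ∫⁻ y : E3, (‖f y‖₊ : ℝ≥0∞) ^ pr) ^ (1/pr) :=
          ENNReal.rpow_le_rpow main (by positivity)
      _ = Me * (∫⁻ y : E3, (‖f y‖₊ : ℝ≥0∞) ^ pr) ^ (1/pr) := by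
          rw [ENNReal.mul_rpow_of_nonneg _ _ (by positivity), ← ENNReal.rpow_mul,
            mul_one_div_cancel hpr0.ne', ENNReal.rpow_one]
end
end

section
/- Let $\delta>0$ and let $K:\mathbb{R}^3\times\mathbb{R}^3\to\mathbb{C}$ satisfy $|K(x,y)|\lesssim \min\{\langle x\rangle^{-1}\langle y\rangle^{-1}\langle |x|-|y|\rangle^{-2},\ \langle |x|-|y|\rangle^{-3-\delta}\}$. Then $T_K$ is bounded on $L^p(\mathbb{R}^3)$ for all $1\le p\le\infty$. -/
open MeasureTheory Real
open scoped ENNReal NNReal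

noncomputable section

lemma abs_le_jbR (s : ℝ) : |s| ≤ jbR s := by
  rw [jbR, ← Real.sqrt_sq_eq_abs]
  exact Real.sqrt_le_sqrt (by nlinarith)

lemma le_jbR (s : ℝ) (_hs : 0 ≤ s) : s ≤ jbR s := (le_abs_self s).trans (abs_le_jbR s)

lemma continuous_jbR : Continuous jbR :=
  Real.continuous_sqrt.comp (continuous_const.add (continuous_pow 2))

lemma jbR_neg (s : ℝ) : jbR (-s) = jbR s := by simp [jbR]

/-- Peetre-type inequality. -/
lemma jbR_peetre (a r : ℝ) : jbR r ≤ Real.sqrt 2 * (jbR a * jbR (a - r)) := by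
  rw [jbR, jbR, jbR, ← Real.sqrt_mul (by positivity), ← Real.sqrt_mul (by norm_num : (0:ℝ) ≤ 2)]
  refine Real.sqrt_le_sqrt ?_
  nlinarith [sq_nonneg (a + (a - r)), sq_nonneg (a * (a - r))]

/-- The bounding kernel. -/
def bnd (δ : ℝ) (x y : E3) : ℝ :=
  min ((jb x)⁻¹ * (jb y)⁻¹ * ((jbR (‖x‖ - ‖y‖)) ^ 2)⁻¹) ((jbR (‖x‖ - ‖y‖)) ^ (-(3 + δ)))

lemma jb_pos (x : E3) : 0 < jb x := jbR_pos ‖x‖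

lemma bnd_pos (δ : ℝ) (x y : E3) : 0 < bnd δ x y := by
  have h1 := jbR_pos (‖x‖ - ‖y‖)
  refine lt_min (mul_pos (mul_pos (inv_pos.2 (jb_pos x)) (inv_pos.2 (jb_pos y)))
    (inv_pos.2 (pow_pos h1 2))) (Real.rpow_pos_of_pos h1 _)

lemma bnd_symm (δ : ℝ) (x y : E3) : bnd δ x y = bnd δ y x := by
  have h : jbR (‖y‖ - ‖x‖) = jbR (‖x‖ - ‖y‖) := by rw [← neg_sub ‖x‖ ‖y‖, jbR_neg]
  simp only [bnd, h]
  ring_nf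

lemma bnd_continuous (δ : ℝ) (x : E3) : Continuous (fun y : E3 => bnd δ x y) := by
  have hc : Continuous fun y : E3 => jbR (‖x‖ - ‖y‖) :=
    continuous_jbR.comp (continuous_const.sub continuous_norm)
  refine Continuous.min ?_ ?_
  · exact (continuous_const.mul
      ((continuous_jbR.comp continuous_norm).inv₀ fun y => (jbR_pos _).ne')).mul
      ((hc.pow 2).inv₀ fun y => (pow_pos (jbR_pos _) 2).ne')
  · exact hc.rpow_const fun y => Or.inl (jbR_pos _).ne'

/-- The dominating 1D profile. -/
def hfun (δ s : ℝ) : ℝ := 2 * ((jbR s) ^ 2)⁻¹ + 4 * (jbR s) ^ (-(1 + δ))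

lemma hfun_nonneg (δ s : ℝ) : 0 ≤ hfun δ s := by
  have := jbR_pos s
  have : (0:ℝ) ≤ (jbR s) ^ (-(1 + δ)) := Real.rpow_nonneg (jbR_pos s).le _
  unfold hfun; positivity

lemma jbR_rpow_eq (s c : ℝ) : (jbR s) ^ c = ((1:ℝ) + s ^ 2) ^ (c / 2) := by
  rw [jbR, Real.sqrt_eq_rpow, ← Real.rpow_mul (by positivity), one_div, inv_mul_eq_div]

lemma hfun_integrable {δ : ℝ} (hδ : 0 < δ) : Integrable (hfun δ) := by
  refine Integrable.add ?_ ?_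
  · have : (fun s : ℝ => 2 * ((jbR s) ^ 2)⁻¹) = fun s : ℝ => 2 * ((1 + s ^ 2)⁻¹) := by
      funext s; rw [jbR_sq]
    rw [this]
    exact integrable_inv_one_add_sq.const_mul 2
  · have h1 : Integrable (fun s : ℝ => ((1:ℝ) + ‖s‖ ^ 2) ^ (-(1 + δ) / 2)) :=
      integrable_rpow_neg_one_add_norm_sq (by simp; linarith)
    have : (fun s : ℝ => 4 * (jbR s) ^ (-(1 + δ))) =
        fun s : ℝ => 4 * ((1:ℝ) + ‖s‖ ^ 2) ^ (-(1 + δ) / 2) := by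
      funext s; rw [jbR_rpow_eq, Real.norm_eq_abs, sq_abs]
    rw [this]
    exact h1.const_mul 4

/-- Key pointwise radial estimate. -/
lemma radial_est {δ : ℝ} (hδ : 0 < δ) {a r : ℝ} (ha : 0 ≤ a) (hr : 0 ≤ r) :
    r ^ 2 * min ((jbR a)⁻¹ * (jbR r)⁻¹ * ((jbR (a - r)) ^ 2)⁻¹) ((jbR (a - r)) ^ (-(3 + δ))) ≤
      hfun δ (a - r) := by
  have hA := jbR_pos a
  have hR := jbR_pos r
  have hD := jbR_pos (a - r)
  have hrpow : (0:ℝ) ≤ (jbR (a - r)) ^ (-(1 + δ)) := Real.rpow_nonneg hD.le _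
  rcases le_or_gt r (2 * jbR a) with h | h
  · -- use the first term of the min
    have h1 : r ^ 2 * ((jbR a)⁻¹ * (jbR r)⁻¹ * ((jbR (a - r)) ^ 2)⁻¹) ≤
        2 * ((jbR (a - r)) ^ 2)⁻¹ := by
      have hrR : r ≤ jbR r := le_jbR r hr
      have key : r ^ 2 * ((jbR a)⁻¹ * (jbR r)⁻¹) ≤ 2 := by
        rw [← mul_inv, ← div_eq_mul_inv, div_le_iff₀ (by positivity)]
        nlinarith
      calc r ^ 2 * ((jbR a)⁻¹ * (jbR r)⁻¹ * ((jbR (a - r)) ^ 2)⁻¹)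
          = (r ^ 2 * ((jbR a)⁻¹ * (jbR r)⁻¹)) * ((jbR (a - r)) ^ 2)⁻¹ := by ring
        _ ≤ 2 * ((jbR (a - r)) ^ 2)⁻¹ := by
            exact mul_le_mul_of_nonneg_right key (by positivity)
    calc r ^ 2 * min _ _ ≤ r ^ 2 * ((jbR a)⁻¹ * (jbR r)⁻¹ * ((jbR (a - r)) ^ 2)⁻¹) :=
          mul_le_mul_of_nonneg_left (min_le_left _ _) (by positivity)
      _ ≤ 2 * ((jbR (a - r)) ^ 2)⁻¹ := h1
      _ ≤ hfun δ (a - r) := by unfold hfun; linarith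
  · -- use the second term of the min
    have haA : a ≤ jbR a := le_jbR a ha
    have hd : r / 2 ≤ jbR (a - r) := by
      have : r - a ≤ |a - r| := by rw [abs_sub_comm]; exact le_abs_self _
      have h2 := abs_le_jbR (a - r)
      linarith
    have hx2 : (jbR (a - r)) ^ (-(2:ℝ)) = ((jbR (a - r)) ^ 2)⁻¹ := by
      rw [show ((2:ℝ)) = ((2:ℕ) : ℝ) by norm_num, Real.rpow_neg hD.le, Real.rpow_natCast]
    have hsplit : (jbR (a - r)) ^ (-(3 + δ)) =
        ((jbR (a - r)) ^ 2)⁻¹ * (jbR (a - r)) ^ (-(1 + δ)) := by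
      rw [show (-(3 + δ)) = (-(2:ℝ)) + (-(1 + δ)) by ring, Real.rpow_add hD, hx2]
    have h2 : r ^ 2 * ((jbR (a - r)) ^ 2)⁻¹ ≤ 4 := by
      rw [← div_eq_mul_inv, div_le_iff₀ (by positivity)]
      nlinarith
    calc r ^ 2 * min _ _ ≤ r ^ 2 * ((jbR (a - r)) ^ (-(3 + δ))) :=
          mul_le_mul_of_nonneg_left (min_le_right _ _) (by positivity)
      _ = (r ^ 2 * ((jbR (a - r)) ^ 2)⁻¹) * (jbR (a - r)) ^ (-(1 + δ)) := by
          rw [hsplit]; ring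
      _ ≤ 4 * (jbR (a - r)) ^ (-(1 + δ)) := mul_le_mul_of_nonneg_right h2 hrpow
      _ ≤ hfun δ (a - r) := by
          unfold hfun
          have : (0:ℝ) ≤ ((jbR (a - r)) ^ 2)⁻¹ := by positivity
          linarith

/-- Integrability of the bounding kernel in its second variable. -/
lemma bnd_integrable {δ : ℝ} (hδ : 0 < δ) (x : E3) :
    Integrable (fun y => bnd δ x y) volume := by
  have hfin : (Module.finrank ℝ E3 : ℝ) < 3 + δ := by
    rw [finrank_euclideanSpace_fin]; norm_num; linarith
  have hint : Integrable (fun y : E3 => ((1:ℝ) + ‖y‖ ^ 2) ^ (-(3 + δ) / 2)) :=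
    integrable_rpow_neg_one_add_norm_sq hfin
  set c : ℝ := Real.sqrt 2 * jb x with hc
  have hc0 : 0 < c := by
    have := jbR_pos ‖x‖; rw [hc, jb_eq]; positivity
  refine Integrable.mono' (hint.const_mul (c ^ (3 + δ)))
    ((bnd_continuous δ x).aestronglyMeasurable) (Filter.Eventually.of_forall fun y => ?_)
  rw [Real.norm_eq_abs, abs_of_pos (bnd_pos δ x y)]
  have hD := jbR_pos (‖x‖ - ‖y‖)
  have hY := jbR_pos ‖y‖
  have hpee : jbR ‖y‖ / c ≤ jbR (‖x‖ - ‖y‖) := by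
    rw [div_le_iff₀ hc0, hc, jb_eq]
    calc jbR ‖y‖ ≤ Real.sqrt 2 * (jbR ‖x‖ * jbR (‖x‖ - ‖y‖)) := jbR_peetre ‖x‖ ‖y‖
      _ = jbR (‖x‖ - ‖y‖) * (Real.sqrt 2 * jbR ‖x‖) := by ring
  have key : (jbR (‖x‖ - ‖y‖)) ^ (-(3 + δ)) ≤
      c ^ (3 + δ) * ((1:ℝ) + ‖y‖ ^ 2) ^ (-(3 + δ) / 2) := by
    have h1 : (jbR (‖x‖ - ‖y‖)) ^ (-(3 + δ)) ≤ (jbR ‖y‖ / c) ^ (-(3 + δ)) :=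
      Real.rpow_le_rpow_of_nonpos (by positivity) hpee (by linarith)
    have h2 : (jbR ‖y‖ / c) ^ (-(3 + δ)) = c ^ (3 + δ) * (jbR ‖y‖) ^ (-(3 + δ)) := by
      rw [Real.div_rpow hY.le hc0.le, Real.rpow_neg hc0.le, div_eq_mul_inv, inv_inv, mul_comm]
    calc (jbR (‖x‖ - ‖y‖)) ^ (-(3 + δ)) ≤ (jbR ‖y‖ / c) ^ (-(3 + δ)) := h1
      _ = c ^ (3 + δ) * (jbR ‖y‖) ^ (-(3 + δ)) := h2
      _ = c ^ (3 + δ) * ((1:ℝ) + ‖y‖ ^ 2) ^ (-(3 + δ) / 2) := by rw [jbR_rpow_eq]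
  exact le_trans (min_le_right _ _) key

/-- Uniform bound on the integral of the bounding kernel. -/
lemma bnd_integral_bound {δ : ℝ} (hδ : 0 < δ) :
    ∃ M : ℝ, 0 ≤ M ∧ ∀ x : E3, ∫ y, bnd δ x y ∂volume ≤ M := by
  set I : ℝ := ∫ s, hfun δ s with hI
  have hI0 : 0 ≤ I := integral_nonneg (hfun_nonneg δ)
  set V : ℝ := (volume (Metric.ball (0 : E3) 1)).toReal with hV
  have hV0 : 0 ≤ V := ENNReal.toReal_nonneg
  refine ⟨3 * (V * I), by positivity, fun x => ?_⟩
  set a : ℝ := ‖x‖ with ha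
  have ha0 : 0 ≤ a := norm_nonneg x
  set B : ℝ → ℝ := fun r =>
    min ((jbR a)⁻¹ * (jbR r)⁻¹ * ((jbR (a - r)) ^ 2)⁻¹) ((jbR (a - r)) ^ (-(3 + δ))) with hB
  have hbnd_eq : (fun y : E3 => bnd δ x y) = fun y => B ‖y‖ := by
    funext y; simp only [bnd, hB, jb_eq, ha]
  have hpolar := integral_fun_norm_addHaar (volume : Measure E3) B
  rw [hbnd_eq, hpolar]
  have hdim : Module.finrank ℝ E3 = 3 := finrank_euclideanSpace_fin
  rw [hdim]
  have hIoi : ∫ r in Set.Ioi (0:ℝ), r ^ (3 - 1) • B r ≤ I := by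
    have hcomp : Integrable (fun r : ℝ => hfun δ (a - r)) := (hfun_integrable hδ).comp_sub_left a
    have step1 : ∫ r in Set.Ioi (0:ℝ), r ^ (3 - 1) • B r ≤
        ∫ r in Set.Ioi (0:ℝ), hfun δ (a - r) := by
      refine integral_mono_of_nonneg ?_ hcomp.integrableOn ?_
      · refine (ae_restrict_iff' measurableSet_Ioi).2 (Filter.Eventually.of_forall fun r hr => ?_)
        have h1 := jbR_pos (a - r)
        have h2 : 0 ≤ B r := by
          rw [hB]
          exact le_min (mul_nonneg (mul_nonneg (inv_nonneg.2 (jbR_pos a).le)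
            (inv_nonneg.2 (jbR_pos r).le)) (inv_nonneg.2 (pow_nonneg h1.le 2)))
            (Real.rpow_nonneg h1.le _)
        simp only [smul_eq_mul]
        have hr0 : (0:ℝ) < r := hr
        positivity
      · refine (ae_restrict_iff' measurableSet_Ioi).2 (Filter.Eventually.of_forall fun r hr => ?_)
        have hr0 : (0:ℝ) < r := hr
        have hre := radial_est hδ ha0 hr0.le
        calc r ^ (3 - 1) • B r = r ^ 2 * B r := by norm_num
          _ ≤ hfun δ (a - r) := by rw [hB]; exact hre
    have step2 : ∫ r in Set.Ioi (0:ℝ), hfun δ (a - r) ≤ ∫ r : ℝ, hfun δ (a - r) :=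
      setIntegral_le_integral hcomp (Filter.Eventually.of_forall fun r => hfun_nonneg δ _)
    have step3 : ∫ r : ℝ, hfun δ (a - r) = I := integral_sub_left_eq_self (hfun δ) volume a
    linarith
  rw [nsmul_eq_mul, smul_eq_mul, measureReal_def, ← hV]
  have h3 : V * ∫ r in Set.Ioi (0:ℝ), r ^ (3 - 1) • B r ≤ V * I :=
    mul_le_mul_of_nonneg_left hIoi hV0
  push_cast
  linarith

/-- Schur-type row/column bounds for the kernel, in `ℝ≥0∞` form. -/
lemma schur_rows {δ : ℝ} (hδ : 0 < δ) {K : E3 → E3 → ℂ} {C : ℝ}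
    (hK : ∀ x y : E3, ‖K x y‖ ≤ C * bnd δ x y) :
    ∃ M : ℝ≥0∞, M ≠ ⊤ ∧ (∀ x, ∫⁻ y, (‖K x y‖₊ : ℝ≥0∞) ∂volume ≤ M) ∧
      (∀ y, ∫⁻ x, (‖K x y‖₊ : ℝ≥0∞) ∂volume ≤ M) := by
  have hC : 0 ≤ C := by
    have h := (norm_nonneg (K 0 0)).trans (hK 0 0)
    nlinarith [bnd_pos δ (0 : E3) (0 : E3)]
  obtain ⟨M₀, hM₀, hMbd⟩ := bnd_integral_bound hδ
  refine ⟨ENNReal.ofReal (C * M₀), ENNReal.ofReal_ne_top, ?_, ?_⟩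
  · intro x
    calc ∫⁻ y, (‖K x y‖₊ : ℝ≥0∞) ∂volume
        ≤ ∫⁻ y, ENNReal.ofReal (C * bnd δ x y) ∂volume := by
          refine lintegral_mono fun y => ?_
          rw [show (‖K x y‖₊ : ℝ≥0∞) = ENNReal.ofReal ‖K x y‖ from (ofReal_norm _).symm]
          exact ENNReal.ofReal_le_ofReal (hK x y)
      _ = ENNReal.ofReal (∫ y, C * bnd δ x y ∂volume) := by
          rw [ofReal_integral_eq_lintegral_ofReal (((bnd_integrable hδ x)).const_mul C)
            (Filter.Eventually.of_forall fun y => mul_nonneg hC (bnd_pos δ x y).le)]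
      _ ≤ ENNReal.ofReal (C * M₀) := by
          refine ENNReal.ofReal_le_ofReal ?_
          rw [integral_const_mul]
          exact mul_le_mul_of_nonneg_left (hMbd x) hC
  · intro y
    calc ∫⁻ x, (‖K x y‖₊ : ℝ≥0∞) ∂volume
        ≤ ∫⁻ x, ENNReal.ofReal (C * bnd δ y x) ∂volume := by
          refine lintegral_mono fun x => ?_
          rw [show (‖K x y‖₊ : ℝ≥0∞) = ENNReal.ofReal ‖K x y‖ from (ofReal_norm _).symm]
          refine ENNReal.ofReal_le_ofReal ?_
          rw [bnd_symm δ y x]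
          exact hK x y
      _ = ENNReal.ofReal (∫ x, C * bnd δ y x ∂volume) := by
          rw [ofReal_integral_eq_lintegral_ofReal (((bnd_integrable hδ y)).const_mul C)
            (Filter.Eventually.of_forall fun x => mul_nonneg hC (bnd_pos δ y x).le)]
      _ ≤ ENNReal.ofReal (C * M₀) := by
          refine ENNReal.ofReal_le_ofReal ?_
          rw [integral_const_mul]
          exact mul_le_mul_of_nonneg_left (hMbd y) hC

/-- Abstract Schur test. -/
lemma schur_test {K : E3 → E3 → ℂ} (hmeas : Measurable (Function.uncurry K)) {M : ℝ≥0∞}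
    (row : ∀ x, ∫⁻ y, (‖K x y‖₊ : ℝ≥0∞) ∂volume ≤ M)
    (col : ∀ y, ∫⁻ x, (‖K x y‖₊ : ℝ≥0∞) ∂volume ≤ M)
    (p : ℝ≥0∞) (hp : 1 ≤ p) (f : E3 → ℂ) (hf : MemLp f p volume) :
    eLpNorm (fun x : E3 => ∫ y : E3, K x y * f y) p volume ≤ M * eLpNorm f p volume := by
  -- replace f by a measurable representative
  obtain hfm := hf.aestronglyMeasurable.aemeasurable
  set g : E3 → ℂ := hfm.mk f with hgdef
  have hg : Measurable g := hfm.measurable_mk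
  have hfg : f =ᵐ[volume] g := hfm.ae_eq_mk
  have hTeq : (fun x : E3 => ∫ y, K x y * f y) = fun x : E3 => ∫ y, K x y * g y := by
    funext x
    refine integral_congr_ae (hfg.mono fun y hy => ?_)
    show K x y * f y = K x y * g y
    rw [hy]
  rw [hTeq, eLpNorm_congr_ae hfg]
  set k : E3 → E3 → ℝ≥0∞ := fun x y => (‖K x y‖₊ : ℝ≥0∞) with hk
  set F : E3 → ℝ≥0∞ := fun y => (‖g y‖₊ : ℝ≥0∞) with hF
  have hkunc : Measurable fun q : E3 × E3 => k q.1 q.2 := hmeas.enorm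
  have hkx : ∀ x, Measurable fun y => k x y := fun x =>
    (Measurable.of_uncurry_left hmeas).enorm
  have hky : ∀ y, Measurable fun x => k x y := fun y =>
    (Measurable.of_uncurry_right hmeas).enorm
  have hFmeas : Measurable F := hg.enorm
  have hpt : ∀ x, (‖∫ y, K x y * g y‖₊ : ℝ≥0∞) ≤ ∫⁻ y, k x y * F y := by
    intro x
    calc (‖∫ y, K x y * g y‖₊ : ℝ≥0∞) ≤ ∫⁻ y, (‖K x y * g y‖₊ : ℝ≥0∞) :=
          enorm_integral_le_lintegral_enorm _
      _ = ∫⁻ y, k x y * F y := by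
          simp only [nnnorm_mul, ENNReal.coe_mul, hk, hF]
  -- swap estimate
  have hswap : ∀ (G : E3 → ℝ≥0∞), Measurable G →
      ∫⁻ x, ∫⁻ y, k x y * G y ∂volume ∂volume ≤ M * ∫⁻ y, G y ∂volume := by
    intro G hG
    have hmint : AEMeasurable (fun q : E3 × E3 => k q.1 q.2 * G q.2)
        ((volume : Measure E3).prod volume) :=
      (hkunc.mul (hG.comp measurable_snd)).aemeasurable
    rw [lintegral_lintegral_swap hmint]
    calc ∫⁻ y, ∫⁻ x, k x y * G y ∂volume ∂volume
        = ∫⁻ y, (∫⁻ x, k x y ∂volume) * G y ∂volume := by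
          refine lintegral_congr fun y => ?_
          rw [lintegral_mul_const _ (hky y)]
      _ ≤ ∫⁻ y, M * G y ∂volume :=
          lintegral_mono fun y => mul_le_mul' (col y) le_rfl
      _ = M * ∫⁻ y, G y ∂volume := lintegral_const_mul M hG
  by_cases hp_top : p = ∞
  · -- case p = ∞
    rw [hp_top, eLpNorm_exponent_top, eLpNorm_exponent_top]
    set N : ℝ≥0∞ := eLpNormEssSup g volume with hN
    have hFN : ∀ᵐ y ∂(volume : Measure E3), F y ≤ N := ae_le_eLpNormEssSup
    refine essSup_le_of_ae_le (M * N) (Filter.Eventually.of_forall fun x => ?_)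
    calc (‖∫ y, K x y * g y‖₊ : ℝ≥0∞) ≤ ∫⁻ y, k x y * F y := hpt x
      _ ≤ ∫⁻ y, k x y * N ∂volume :=
          lintegral_mono_ae (hFN.mono fun y hy => mul_le_mul' le_rfl hy)
      _ = (∫⁻ y, k x y ∂volume) * N := lintegral_mul_const _ (hkx x)
      _ ≤ M * N := mul_le_mul' (row x) le_rfl
  by_cases hp_one : p = 1
  · -- case p = 1
    rw [hp_one, eLpNorm_one_eq_lintegral_enorm, eLpNorm_one_eq_lintegral_enorm]
    calc ∫⁻ x, (‖∫ y, K x y * g y‖₊ : ℝ≥0∞) ∂volume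
        ≤ ∫⁻ x, ∫⁻ y, k x y * F y ∂volume ∂volume := lintegral_mono hpt
      _ ≤ M * ∫⁻ y, F y ∂volume := hswap F hFmeas
  -- case 1 < p < ∞
  have hp0 : p ≠ 0 := by
    intro h; rw [h] at hp; exact absurd hp (by simp)
  have hp_lt : 1 < p := lt_of_le_of_ne hp (Ne.symm hp_one)
  have hpr1 : 1 < p.toReal := by
    rw [show (1:ℝ) = (1:ℝ≥0∞).toReal by simp]
    exact (ENNReal.toReal_lt_toReal (by simp) hp_top).2 hp_lt
  set pr : ℝ := p.toReal with hpr
  have hpr0 : 0 < pr := lt_trans one_pos hpr1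
  have hpq : pr.HolderConjugate (Real.conjExponent pr) := Real.HolderConjugate.conjExponent hpr1
  set q : ℝ := Real.conjExponent pr with hq
  have hq0 : 0 < q := hpq.symm.pos
  have hinv : 1 / q + 1 / pr = 1 := by
    have := hpq.symm.inv_add_inv_eq_one
    simpa [one_div] using this
  rw [eLpNorm_eq_lintegral_rpow_enorm_toReal hp0 hp_top, eLpNorm_eq_lintegral_rpow_enorm_toReal hp0 hp_top]
  set H : E3 → ℝ≥0∞ := fun x => ∫⁻ y, k x y * F y ^ pr ∂volume with hH
  have hHmeas : Measurable H := by
    apply Measurable.lintegral_prod_right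
    exact hkunc.mul ((hFmeas.comp measurable_snd).pow_const _)
  -- pointwise Hölder
  have hpoint : ∀ x, (∫⁻ y, k x y * F y ∂volume) ≤ M ^ (1/q) * (H x) ^ (1/pr) := by
    intro x
    have hhold := ENNReal.lintegral_mul_le_Lp_mul_Lq volume hpq.symm
      (((hkx x).pow_const (1/q)).aemeasurable)
      ((((hkx x).pow_const (1/pr)).mul hFmeas).aemeasurable)
    have heq1 : ∀ y, ((fun y => k x y ^ (1/q)) * fun y => k x y ^ (1/pr) * F y) y
        = k x y * F y := by
      intro y
      simp only [Pi.mul_apply]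
      rw [← mul_assoc, ← ENNReal.rpow_add_of_nonneg _ _ (by positivity) (by positivity), hinv,
        ENNReal.rpow_one]
    have heq2 : ∀ y, (k x y ^ (1/q)) ^ q = k x y := by
      intro y
      rw [← ENNReal.rpow_mul, one_div, inv_mul_cancel₀ hq0.ne', ENNReal.rpow_one]
    have heq3 : ∀ y, (k x y ^ (1/pr) * F y) ^ pr = k x y * F y ^ pr := by
      intro y
      rw [ENNReal.mul_rpow_of_nonneg _ _ hpr0.le, ← ENNReal.rpow_mul, one_div,
        inv_mul_cancel₀ hpr0.ne', ENNReal.rpow_one]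
    calc (∫⁻ y, k x y * F y ∂volume)
        = ∫⁻ y, ((fun y => k x y ^ (1/q)) * fun y => k x y ^ (1/pr) * F y) y ∂volume := by
          refine lintegral_congr fun y => (heq1 y).symm
      _ ≤ (∫⁻ y, (k x y ^ (1/q)) ^ q ∂volume) ^ (1/q) *
            (∫⁻ y, (k x y ^ (1/pr) * F y) ^ pr ∂volume) ^ (1/pr) := hhold
      _ = (∫⁻ y, k x y ∂volume) ^ (1/q) * (H x) ^ (1/pr) := by
          rw [lintegral_congr heq2, lintegral_congr heq3]
      _ ≤ M ^ (1/q) * (H x) ^ (1/pr) := by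
          exact mul_le_mul' (ENNReal.rpow_le_rpow (row x) (by positivity)) le_rfl
  -- put everything together
  have hmain : ∫⁻ x, (‖∫ y, K x y * g y‖₊ : ℝ≥0∞) ^ pr ∂volume ≤
      M ^ (pr/q) * (M * ∫⁻ y, F y ^ pr ∂volume) := by
    calc ∫⁻ x, (‖∫ y, K x y * g y‖₊ : ℝ≥0∞) ^ pr ∂volume
        ≤ ∫⁻ x, (M ^ (1/q) * (H x) ^ (1/pr)) ^ pr ∂volume := by
          refine lintegral_mono fun x => ?_
          exact ENNReal.rpow_le_rpow ((hpt x).trans (hpoint x)) hpr0.le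
      _ = ∫⁻ x, M ^ (pr/q) * H x ∂volume := by
          refine lintegral_congr fun x => ?_
          have e3 : (1/q) * pr = pr/q := by ring
          rw [ENNReal.mul_rpow_of_nonneg _ _ hpr0.le, ← ENNReal.rpow_mul, ← ENNReal.rpow_mul, e3,
            one_div, inv_mul_cancel₀ hpr0.ne', ENNReal.rpow_one]
      _ = M ^ (pr/q) * ∫⁻ x, H x ∂volume := lintegral_const_mul _ hHmeas
      _ ≤ M ^ (pr/q) * (M * ∫⁻ y, F y ^ pr ∂volume) := by
          exact mul_le_mul' le_rfl (hswap _ (hFmeas.pow_const _))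
  calc (∫⁻ x, (‖∫ y, K x y * g y‖₊ : ℝ≥0∞) ^ pr ∂volume) ^ (1/pr)
      ≤ (M ^ (pr/q) * (M * ∫⁻ y, F y ^ pr ∂volume)) ^ (1/pr) :=
        ENNReal.rpow_le_rpow hmain (by positivity)
    _ = M * (∫⁻ y, F y ^ pr ∂volume) ^ (1/pr) := by
        have e1 : (pr/q) * (1/pr) = 1/q := by field_simp
        have e2 : (M ^ (pr/q)) ^ (1/pr) * M ^ (1/pr) = M := by
          rw [← ENNReal.rpow_mul, e1,
            ← ENNReal.rpow_add_of_nonneg _ _ (by positivity) (by positivity), hinv,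
            ENNReal.rpow_one]
        rw [ENNReal.mul_rpow_of_nonneg _ _ (by positivity),
          ENNReal.mul_rpow_of_nonneg _ _ (by positivity), ← mul_assoc, e2]

/-- If `|K(x,y)| ≲ min{⟨x⟩⁻¹⟨y⟩⁻¹⟨|x|-|y|⟩⁻², ⟨|x|-|y|⟩^{-3-δ}}` for some `δ > 0`, then
`T_K` is bounded on `L^p(ℝ³)` for all `1 ≤ p ≤ ∞`. -/
theorem kernel_min_bound_Lp_bounded (δ : ℝ) (hδ : 0 < δ) (K : E3 → E3 → ℂ)
    (hmeas : Measurable (Function.uncurry K))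
    (hK : ∃ C : ℝ, ∀ x y : E3, ‖K x y‖ ≤
      C * min ((jb x)⁻¹ * (jb y)⁻¹ * ((jbR (‖x‖ - ‖y‖)) ^ 2)⁻¹)
              ((jbR (‖x‖ - ‖y‖)) ^ (-(3 + δ)))) :
    ∀ p : ℝ≥0∞, 1 ≤ p → ∃ C : ℝ≥0, ∀ f : E3 → ℂ, MemLp f p volume →
      eLpNorm (fun x : E3 => ∫ y : E3, K x y * f y) p volume ≤ C * eLpNorm f p volume := by
  obtain ⟨C₀, hK₀⟩ := hK
  have hK' : ∀ x y : E3, ‖K x y‖ ≤ C₀ * bnd δ x y := hK₀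
  obtain ⟨M, hMtop, hrow, hcol⟩ := schur_rows hδ hK'
  intro p hp
  refine ⟨M.toNNReal, fun f hf => ?_⟩
  have := schur_test hmeas hrow hcol p hp f hf
  rwa [ENNReal.coe_toNNReal hMtop]
end
end

section
/- Let $\mathcal{K}(s,r)=\frac{\chi_{\{|s-r|\ge 1\}}}{4s^2(s-r)}$ for $s,r\in\mathbb{R}$, $s\neq 0$. There is a constant $A$ such that for every $\delta>0$ and every $r,\bar r\in\mathbb{R}$ with $|r-\bar r|<\delta$, $\int_{\{s: |s-r|\ge 2\delta\}} |\mathcal{K}(s,r)-\mathcal{K}(s,\bar r)|\, s^2\,ds \le A$. -/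
open MeasureTheory Real
open scoped ENNReal NNReal

noncomputable section

open Set

/-- Key pointwise estimate: for `|a - b| < δ` and `2δ ≤ |a|`, with `M = max 1 (2δ)`. -/
lemma oneD_kernel_case_ineq {δ a b M : ℝ} (hδ : 0 < δ) (hM : M = max 1 (2*δ))
    (hab : |a - b| < δ) (ha : 2*δ ≤ |a|) :
    |(if (1:ℝ) ≤ |a| then (1:ℝ) else 0)/a - (if (1:ℝ) ≤ |b| then (1:ℝ) else 0)/b|
      ≤ (if M ≤ |a| then 2*M/a^2 else 0) + (if |a| ≤ 4/3 then (1:ℝ) else 0) := by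
  have hM1 : (1:ℝ) ≤ M := hM ▸ le_max_left _ _
  have hMδ : 2*δ ≤ M := hM ▸ le_max_right _ _
  have ha0 : 0 < |a| := lt_of_lt_of_le (by linarith) ha
  have hane : a ≠ 0 := abs_pos.mp ha0
  have ha2 : (0:ℝ) < a^2 := by positivity
  have ht1 : (0:ℝ) ≤ (if M ≤ |a| then 2*M/a^2 else 0) := by
    split_ifs with h
    · exact div_nonneg (by linarith) ha2.le
    · exact le_refl 0
  have ht2 : (0:ℝ) ≤ (if |a| ≤ 4/3 then (1:ℝ) else 0) := by
    split_ifs <;> norm_num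
  by_cases hA : (1:ℝ) ≤ |a| <;> by_cases hB : (1:ℝ) ≤ |b|
  · -- both indicators on
    have hbne : b ≠ 0 := abs_pos.mp (by linarith)
    have hMa : M ≤ |a| := hM ▸ max_le hA ha
    have hb_low : |a|/2 ≤ |b| := by
      have h1 : |a| - |b| ≤ |a - b| := abs_sub_abs_le_abs_sub a b
      linarith
    have key : |1/a - 1/b| = |a - b| / (|a| * |b|) := by
      rw [div_sub_div _ _ hane hbne, abs_div, abs_mul, one_mul, mul_one, abs_sub_comm]
    rw [if_pos hA, if_pos hB, if_pos hMa, key]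
    have h2 : |a - b| / (|a| * |b|) ≤ δ / (|a| * (|a|/2)) := by
      apply div_le_div₀ hδ.le hab.le (by positivity)
      exact mul_le_mul_of_nonneg_left hb_low ha0.le
    have h3 : δ / (|a| * (|a|/2)) ≤ 2*M/a^2 := by
      rw [div_le_div_iff₀ (by positivity) ha2]
      have : |a| * |a| = a^2 := by rw [← sq_abs]; ring
      nlinarith
    linarith
  · -- a on, b off
    have haub : |a| < 1 + δ := by
      have h1 : |a| - |b| ≤ |a - b| := abs_sub_abs_le_abs_sub a b
      have : |b| < 1 := lt_of_not_ge hB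
      linarith
    rw [if_pos hA, if_neg hB, zero_div, sub_zero, abs_div, abs_one]
    by_cases hsmall : |a| ≤ 4/3
    · have : 1/|a| ≤ 1 := by
        rw [div_le_one ha0]; exact hA
      rw [if_pos hsmall]
      linarith
    · have h43 : (4:ℝ)/3 < |a| := lt_of_not_ge hsmall
      have hδ3 : 1/3 < δ := by linarith
      have hMa : M ≤ |a| := hM ▸ max_le hA ha
      have haM : |a| ≤ 2*M := by nlinarith
      rw [if_pos hMa, if_neg hsmall, add_zero]
      rw [div_le_div_iff₀ ha0 ha2]
      have : |a| * |a| = a^2 := by rw [← sq_abs]; ring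
      nlinarith
  · -- a off, b on
    have hb0 : (0:ℝ) < |b| := by linarith
    have haub : |a| < 1 := lt_of_not_ge hA
    have hsmall : |a| ≤ 4/3 := by linarith
    rw [if_neg hA, if_pos hB, zero_div, zero_sub, abs_neg, abs_div, abs_one, if_pos hsmall]
    have : 1/|b| ≤ 1 := by rw [div_le_one hb0]; exact hB
    linarith
  · rw [if_neg hA, if_neg hB]
    simp only [zero_div, sub_zero, abs_zero]
    linarith

/-- The lintegral of the dominating function is bounded by `100`. -/
lemma oneD_kernel_dominating_bound (M δ : ℝ) (hδ : 0 < δ) (hM1 : (1:ℝ) ≤ M)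
    (hMδ : 2*δ ≤ M) (hM0 : (0:ℝ) < M) :
    (∫⁻ a : ℝ, ENNReal.ofReal ((if M ≤ |a| then 2*M/a^2 else 0)
      + (if |a| ≤ 4/3 then (1:ℝ) else 0))) ≤ ENNReal.ofReal 100 := by
  have h1m : Measurable fun a : ℝ => ENNReal.ofReal (if M ≤ |a| then 2*M/a^2 else 0) :=
    ENNReal.measurable_ofReal.comp <| Measurable.ite
      (measurableSet_le measurable_const measurable_abs)
      (measurable_const.div (measurable_id.pow_const 2)) measurable_const
  have split : (∫⁻ a : ℝ, ENNReal.ofReal ((if M ≤ |a| then 2*M/a^2 else 0)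
      + (if |a| ≤ 4/3 then (1:ℝ) else 0)))
      ≤ (∫⁻ a : ℝ, ENNReal.ofReal (if M ≤ |a| then 2*M/a^2 else 0))
        + ∫⁻ a : ℝ, ENNReal.ofReal (if |a| ≤ 4/3 then (1:ℝ) else 0) := by
    rw [← lintegral_add_left h1m]
    exact lintegral_mono fun a => ENNReal.ofReal_add_le
  refine split.trans ?_
  -- second term
  have hT2 : (∫⁻ a : ℝ, ENNReal.ofReal (if |a| ≤ 4/3 then (1:ℝ) else 0))
      ≤ ENNReal.ofReal (8/3) := by
    have heq : ∀ a : ℝ, ENNReal.ofReal (if |a| ≤ 4/3 then (1:ℝ) else 0)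
        = Set.indicator (Icc (-(4/3)) (4/3) : Set ℝ) (fun _ => (1:ℝ≥0∞)) a := by
      intro a
      by_cases h : |a| ≤ (4:ℝ)/3
      · rw [if_pos h, Set.indicator_of_mem (by rwa [Set.mem_Icc, ← abs_le])]
        simp
      · rw [if_neg h, Set.indicator_of_notMem (by rwa [Set.mem_Icc, ← abs_le])]
        simp
    simp_rw [heq]
    rw [lintegral_indicator measurableSet_Icc, setLIntegral_const, one_mul,
      Real.volume_Icc]
    apply ENNReal.ofReal_le_ofReal
    norm_num
  -- first term
  have hRight : (∫⁻ a : ℝ in Ici M, ENNReal.ofReal (2*M/a^2)) ≤ ENNReal.ofReal 2 := by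
    rw [← setLIntegral_congr (Ioi_ae_eq_Ici (a := M) (μ := volume))]
    have hint : IntegrableOn (fun a : ℝ => 2*M/a^2) (Ioi M) := by
      have h := integrableOn_Ioi_rpow_of_lt (show (-2:ℝ) < -1 by norm_num) hM0
      have h2 : IntegrableOn (fun x : ℝ => 2*M * x ^ (-2:ℝ)) (Ioi M) := h.const_mul _
      apply h2.congr_fun ?_ measurableSet_Ioi
      intro x hx
      have hx0 : 0 < x := hM0.trans hx
      show 2*M * x ^ (-2:ℝ) = 2*M/x^2
      rw [Real.rpow_neg hx0.le, show (2:ℝ) = ((2:ℕ):ℝ) by norm_num,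
        Real.rpow_natCast]
      field_simp
    have hval : ∫ a in Ioi M, 2*M/a^2 = 2 := by
      have h := integral_Ioi_rpow_of_lt (show (-2:ℝ) < -1 by norm_num) hM0
      have congr1 : ∫ a in Ioi M, 2*M/a^2 = ∫ a in Ioi M, 2*M * a ^ (-2:ℝ) := by
        apply setIntegral_congr_fun measurableSet_Ioi
        intro x hx
        have hx0 : 0 < x := hM0.trans hx
        show 2*M/x^2 = 2*M * x ^ (-2:ℝ)
        rw [Real.rpow_neg hx0.le, show (2:ℝ) = ((2:ℕ):ℝ) by norm_num,
          Real.rpow_natCast]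
        field_simp
      rw [congr1, MeasureTheory.integral_const_mul, h]
      rw [show (-2:ℝ) + 1 = -1 by norm_num, Real.rpow_neg_one]
      field_simp
    rw [← ofReal_integral_eq_lintegral_ofReal hint ?_, hval]
    · filter_upwards with a
      exact div_nonneg (by linarith) (sq_nonneg a)
  have hLeft : (∫⁻ a : ℝ in Iic (-M), ENNReal.ofReal (2*M/a^2))
      = ∫⁻ a : ℝ in Ici M, ENNReal.ofReal (2*M/a^2) := by
    have h := (Measure.measurePreserving_neg (volume : Measure ℝ)).setLIntegral_comp_preimage_emb
      measurableEmbedding_neg (fun a : ℝ => ENNReal.ofReal (2*M/a^2)) (Iic (-M))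
    rw [← h]
    have hpre : (Neg.neg ⁻¹' (Iic (-M)) : Set ℝ) = Ici M := by
      ext x; simp
    rw [hpre]
    apply setLIntegral_congr_fun measurableSet_Ici
    intro a _
    beta_reduce
    rw [neg_pow]
    norm_num
  have hT1 : (∫⁻ a : ℝ, ENNReal.ofReal (if M ≤ |a| then 2*M/a^2 else 0))
      ≤ ENNReal.ofReal 2 + ENNReal.ofReal 2 := by
    have heq : ∀ a : ℝ, ENNReal.ofReal (if M ≤ |a| then 2*M/a^2 else 0)
        = Set.indicator {a : ℝ | M ≤ |a|} (fun a => ENNReal.ofReal (2*M/a^2)) a := by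
      intro a
      by_cases h : M ≤ |a|
      · rw [if_pos h, Set.indicator_of_mem (show a ∈ {a : ℝ | M ≤ |a|} from h)]
      · rw [if_neg h, Set.indicator_of_notMem (show a ∉ {a : ℝ | M ≤ |a|} from h)]
        simp
    simp_rw [heq]
    have hsets : {a : ℝ | M ≤ |a|} = Iic (-M) ∪ Ici M := by
      ext x
      simp only [mem_setOf_eq, mem_union, mem_Iic, mem_Ici, le_abs, le_neg]
      tauto
    rw [lintegral_indicator (by rw [hsets]; exact measurableSet_Iic.union measurableSet_Ici),
      hsets]
    calc (∫⁻ a : ℝ in Iic (-M) ∪ Ici M, ENNReal.ofReal (2*M/a^2))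
        = (∫⁻ a : ℝ in Iic (-M), ENNReal.ofReal (2*M/a^2))
          + ∫⁻ a : ℝ in Ici M, ENNReal.ofReal (2*M/a^2) := by
          rw [lintegral_union measurableSet_Ici]
          rw [Set.Iic_disjoint_Ici]
          intro h; linarith
      _ ≤ _ := by
          rw [hLeft]
          exact add_le_add hRight hRight
  calc _ ≤ (ENNReal.ofReal 2 + ENNReal.ofReal 2) + ENNReal.ofReal (8/3) :=
        add_le_add hT1 hT2
    _ ≤ _ := by
        rw [← ENNReal.ofReal_add (by norm_num) (by norm_num),
          ← ENNReal.ofReal_add (by norm_num) (by norm_num)]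
        apply ENNReal.ofReal_le_ofReal
        norm_num

/-- Hörmander-type regularity condition for the one-dimensional kernel
`𝒦(s,r) = χ_{|s-r|≥1}/(4s²(s-r))` with respect to the doubling measure `s² ds`. -/
theorem oneD_kernel_hormander_condition
    (𝒦 : ℝ → ℝ → ℝ)
    (h𝒦 : ∀ s r : ℝ, 𝒦 s r = (if (1 : ℝ) ≤ |s - r| then 1 else 0) / (4 * s ^ 2 * (s - r))) :
    ∃ A : ℝ, ∀ δ : ℝ, 0 < δ → ∀ r rb : ℝ, |r - rb| < δ →
      (∫⁻ s in {s : ℝ | 2 * δ ≤ |s - r|},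
          ENNReal.ofReal (|𝒦 s r - 𝒦 s rb| * s ^ 2)) ≤ ENNReal.ofReal A := by
  refine ⟨100, ?_⟩
  intro δ hδ r rb hrb
  set M : ℝ := max 1 (2*δ) with hM
  have hM1 : (1:ℝ) ≤ M := le_max_left _ _
  have hMδ : 2*δ ≤ M := le_max_right _ _
  have hM0 : (0:ℝ) < M := lt_of_lt_of_le one_pos hM1
  set g : ℝ → ℝ≥0∞ := fun a => ENNReal.ofReal ((if M ≤ |a| then 2*M/a^2 else 0)
      + (if |a| ≤ 4/3 then (1:ℝ) else 0)) with hg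
  have hgm : Measurable g := by
    apply ENNReal.measurable_ofReal.comp
    apply Measurable.add
    · exact Measurable.ite (measurableSet_le measurable_const measurable_abs)
        (measurable_const.div (measurable_id.pow_const 2)) measurable_const
    · exact Measurable.ite (measurableSet_le measurable_abs measurable_const)
        measurable_const measurable_const
  -- pointwise bound
  have hpt : ∀ s ∈ {s : ℝ | 2 * δ ≤ |s - r|},
      ENNReal.ofReal (|𝒦 s r - 𝒦 s rb| * s ^ 2) ≤ g (s - r) := by
    intro s hs
    have hs' : 2*δ ≤ |s - r| := hs
    rcases eq_or_ne s 0 with h0 | h0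
    · subst h0
      simp [h𝒦]
    · have hs2 : s^2 ≠ 0 := pow_ne_zero 2 h0
      have e1 : ∀ u c : ℝ, u/(4*s^2*c) = (u/c)/(4*s^2) := by
        intro u c; rw [div_div, mul_comm c (4*s^2)]
      have key : |𝒦 s r - 𝒦 s rb| * s^2
          = |(if (1:ℝ) ≤ |s-r| then (1:ℝ) else 0)/(s-r)
              - (if (1:ℝ) ≤ |s-rb| then (1:ℝ) else 0)/(s-rb)| / 4 := by
        rw [h𝒦, h𝒦, e1, e1, div_sub_div_same, abs_div,
          abs_of_nonneg (by positivity : (0:ℝ) ≤ 4*s^2)]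
        field_simp
      rw [key]
      have hab' : |(s-r) - (s-rb)| < δ := by
        rw [show (s-r) - (s-rb) = -(r - rb) by ring, abs_neg]; exact hrb
      have hci := oneD_kernel_case_ineq hδ hM hab' hs'
      refine ENNReal.ofReal_le_ofReal ?_
      calc _ ≤ |(if (1:ℝ) ≤ |s-r| then (1:ℝ) else 0)/(s-r)
              - (if (1:ℝ) ≤ |s-rb| then (1:ℝ) else 0)/(s-rb)| := by
              apply div_le_self (abs_nonneg _) (by norm_num)
        _ ≤ _ := hci
  have hmono : (∫⁻ s in {s : ℝ | 2 * δ ≤ |s - r|},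
        ENNReal.ofReal (|𝒦 s r - 𝒦 s rb| * s ^ 2)) ≤ ∫⁻ a, g a := by
    calc (∫⁻ s in {s : ℝ | 2 * δ ≤ |s - r|}, ENNReal.ofReal (|𝒦 s r - 𝒦 s rb| * s ^ 2))
        ≤ ∫⁻ s in {s : ℝ | 2 * δ ≤ |s - r|}, g (s - r) :=
          setLIntegral_mono (hgm.comp (measurable_id.sub measurable_const)) hpt
      _ ≤ ∫⁻ s, g (s - r) := setLIntegral_le_lintegral _ _
      _ = ∫⁻ a, g a := lintegral_sub_right_eq_self g r
  exact hmono.trans (oneD_kernel_dominating_bound M δ hδ hM1 hMδ hM0)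
end
end

section
/- Let $R_0\ge 1$, $R\ge 1$, $u_1,u_2\in\mathbb{R}^3$ with $|u_1|,|u_2|\le R_0$, and $x\in\mathbb{R}^3$ with $R+2R_0+1\le |x|\le R+2R_0+2$. Then $\Phi(u_1,u_2,x):=\int_{|y|\le R}\frac{|x-u_1|}{|x-u_1|^4-|y-u_2|^4}\,dy \ \ge\ \pi\ln\Big(1+\frac{2(R-R_0)}{4R_0+2}\Big)-2\pi^2$; in particular $\Phi(u_1,u_2,x)\to\infty$ as $R\to\infty$, uniformly in $u_1,u_2$. Moreover, for such $x,y,u_1,u_2$ one has $|x-u_1|-|y-u_2|\ge 1$, so the indicator $\chi_{\{||x-u_1|-|y-u_2||\ge1\}}$ equals $1$ in the integrand. -/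
open MeasureTheory Real
open scoped ENNReal NNReal

noncomputable section

lemma ftc_radial (M ρ : ℝ) (hM : 0 < M) (hρ : 0 ≤ ρ) (hρM : ρ < M) :
    ∫ r in (0:ℝ)..ρ, r^2 * (M/(M^4 - r^4)) =
      (1/4)*(Real.log (M+ρ) - Real.log (M-ρ)) - (1/2)*Real.arctan (ρ/M) := by
  have huIcc : Set.uIcc (0:ℝ) ρ = Set.Icc 0 ρ := Set.uIcc_of_le hρ
  have hden : ∀ r ∈ Set.uIcc (0:ℝ) ρ, M^4 - r^4 ≠ 0 := by
    intro r hr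
    rw [huIcc] at hr
    have h4 : r^4 < M^4 :=
      pow_lt_pow_left₀ (lt_of_le_of_lt hr.2 hρM) hr.1 (by norm_num)
    linarith
  have hcont : ContinuousOn (fun r : ℝ => r^2 * (M/(M^4 - r^4))) (Set.uIcc 0 ρ) :=
    ContinuousOn.mul (continuous_pow 2).continuousOn
      (ContinuousOn.div continuousOn_const
        (continuous_const.sub (continuous_pow 4)).continuousOn hden)
  have key : ∀ r ∈ Set.uIcc (0:ℝ) ρ,
      HasDerivAt (fun t => (1/4)*(Real.log (M+t) - Real.log (M-t)) - (1/2)*Real.arctan (t/M))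
        (r^2 * (M/(M^4 - r^4))) r := by
    intro r hr
    have hd : M^4 - r^4 ≠ 0 := hden r hr
    rw [huIcc] at hr
    have hrM : r < M := lt_of_le_of_lt hr.2 hρM
    have h1 : (0:ℝ) < M + r := by linarith [hr.1]
    have h2 : (0:ℝ) < M - r := by linarith
    have hl1 : HasDerivAt (fun t : ℝ => Real.log (M + t)) (1/(M+r)) r := by
      have := ((hasDerivAt_id r).const_add M).log h1.ne'
      simpa using this
    have hl2 : HasDerivAt (fun t : ℝ => Real.log (M - t)) (-1/(M-r)) r := by
      have := ((hasDerivAt_id r).const_sub M).log h2.ne'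
      simpa using this
    have ha : HasDerivAt (fun t : ℝ => Real.arctan (t/M)) ((1/(1+(r/M)^2)) * (1/M)) r := by
      have hdiv : HasDerivAt (fun t : ℝ => t/M) (1/M) r := by
        simpa using (hasDerivAt_id r).div_const M
      exact (Real.hasDerivAt_arctan (r/M)).comp r hdiv
    have := (((hl1.sub hl2).const_mul (1/4:ℝ)).sub (ha.const_mul (1/2:ℝ)))
    convert this using 1
    case e'_4 => rfl
    case e'_5 => rfl
    case e'_8 => rfl
    have hM2 : M^2 + r^2 ≠ 0 := by positivity
    have hM0 : M ≠ 0 := hM.ne'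
    have h1' := h1.ne'
    have h2' := h2.ne'
    have h3 : 1 + (r/M)^2 = (M^2+r^2)/M^2 := by field_simp
    rw [h3]
    field_simp
    ring
  rw [intervalIntegral.integral_eq_sub_of_hasDerivAt key (hcont.intervalIntegrable)]
  simp [Real.arctan_zero]

lemma ball_integral (M ρ : ℝ) (u : E3) (hM : 0 < M) (hρ : 0 ≤ ρ) (hρM : ρ < M) :
    ∫ y in Metric.closedBall u ρ, M / (M^4 - ‖y - u‖^4) =
      π * (Real.log (M+ρ) - Real.log (M-ρ)) - 2*π*Real.arctan (ρ/M) := by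
  set G : ℝ → ℝ := fun r => if r ≤ ρ then M/(M^4 - r^4) else 0 with hG
  have step1 : ∫ y in Metric.closedBall u ρ, M / (M^4 - ‖y - u‖^4) = ∫ z : E3, G ‖z‖ := by
    rw [← MeasureTheory.integral_indicator measurableSet_closedBall]
    have hi : ∀ y : E3, Set.indicator (Metric.closedBall u ρ)
        (fun y => M / (M^4 - ‖y - u‖^4)) y = G ‖y - u‖ := by
      intro y
      by_cases h : y ∈ Metric.closedBall u ρ
      · have h' : ‖y - u‖ ≤ ρ := by rwa [Metric.mem_closedBall, dist_eq_norm] at h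
        simp [Set.indicator_of_mem h, hG, h']
      · have h' : ¬ ‖y - u‖ ≤ ρ := by rwa [Metric.mem_closedBall, dist_eq_norm] at h
        simp [Set.indicator_of_notMem h, hG, h']
    simp_rw [hi]
    exact MeasureTheory.integral_sub_right_eq_self (fun z => G ‖z‖) u
  have hvol : (volume (Metric.ball (0:E3) 1)).toReal = 4/3*π := by
    rw [EuclideanSpace.volume_ball]
    have h52 : Real.Gamma ((Fintype.card (Fin 3) : ℝ)/2 + 1) = 3/4 * Real.sqrt π := by
      have h : ((Fintype.card (Fin 3) : ℝ)/2 + 1) = (1/2 + 1) + 1 := by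
        simp [Fintype.card_fin]; ring
      rw [h, Real.Gamma_add_one (by norm_num), Real.Gamma_add_one (by norm_num),
        Real.Gamma_one_half_eq]
      ring
    rw [h52]
    have hs : Real.sqrt π > 0 := Real.sqrt_pos.2 Real.pi_pos
    have hsq : Real.sqrt π ^ 2 = π := Real.sq_sqrt Real.pi_pos.le
    simp only [Fintype.card_fin, ENNReal.ofReal_one, one_pow, one_mul]
    rw [ENNReal.toReal_ofReal (by positivity)]
    field_simp
    nlinarith [hs, hsq]
  have hrad : ∫ r in Set.Ioi (0:ℝ), r ^ 2 * G r
      = (1/4)*(Real.log (M+ρ) - Real.log (M-ρ)) - (1/2)*Real.arctan (ρ/M) := by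
    have hind : ∀ r : ℝ, r ^ 2 * G r
        = Set.indicator (Set.Iic ρ) (fun r => r^2 * (M/(M^4 - r^4))) r := by
      intro r
      by_cases h : r ≤ ρ <;> simp [hG, h, Set.indicator, Set.mem_Iic]
    simp_rw [hind]
    rw [MeasureTheory.integral_indicator measurableSet_Iic,
      MeasureTheory.Measure.restrict_restrict measurableSet_Iic,
      Set.inter_comm, Set.Ioi_inter_Iic,
      ← intervalIntegral.integral_of_le hρ]
    exact ftc_radial M ρ hM hρ hρM
  rw [step1, MeasureTheory.integral_fun_norm_addHaar volume G]
  simp only [finrank_euclideanSpace, Fintype.card_fin, nsmul_eq_mul, smul_eq_mul]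
  norm_num
  rw [hrad, measureReal_def, hvol]
  ring

/-- Key lower bound for the unboundedness on `L^∞`: for `|x|` in the shell
`R+2R₀+1 ≤ |x| ≤ R+2R₀+2` and `|u₁|,|u₂| ≤ R₀`, the truncation is inactive and
`Φ(u₁,u₂,x) = ∫_{|y|≤R} |x-u₁|/(|x-u₁|⁴-|y-u₂|⁴) dy ≥ π ln(1 + 2(R-R₀)/(4R₀+2)) - 2π²`. -/
theorem Phi_lower_bound (R₀ R : ℝ) (hR₀ : 1 ≤ R₀) (hR : 1 ≤ R)
    (u₁ u₂ x : E3) (hu₁ : ‖u₁‖ ≤ R₀) (hu₂ : ‖u₂‖ ≤ R₀)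
    (hx₁ : R + 2 * R₀ + 1 ≤ ‖x‖) (hx₂ : ‖x‖ ≤ R + 2 * R₀ + 2) :
    (∀ y : E3, ‖y‖ ≤ R → 1 ≤ ‖x - u₁‖ - ‖y - u₂‖) ∧
    π * Real.log (1 + 2 * (R - R₀) / (4 * R₀ + 2)) - 2 * π ^ 2 ≤
      ∫ y in {y : E3 | ‖y‖ ≤ R}, ‖x - u₁‖ / (‖x - u₁‖ ^ 4 - ‖y - u₂‖ ^ 4) := by
  set M := ‖x - u₁‖ with hMdef
  have hM1 : R + R₀ + 1 ≤ M := by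
    have := norm_sub_norm_le x u₁
    simp only [← hMdef] at this
    linarith
  have hMpos : 0 < M := by linarith
  have hkey : ∀ y : E3, ‖y‖ ≤ R → 1 ≤ M - ‖y - u₂‖ := by
    intro y hy
    have := norm_sub_le y u₂
    linarith
  refine ⟨fun y hy => by linarith [hkey y hy], ?_⟩
  set S : Set E3 := {y : E3 | ‖y‖ ≤ R} with hSdef
  have hSeq : S = Metric.closedBall (0:E3) R := by
    ext y; simp [hSdef, mem_closedBall_zero_iff]
  have hSmeas : MeasurableSet S := by rw [hSeq]; exact measurableSet_closedBall
  set f : E3 → ℝ := fun y => M / (M^4 - ‖y - u₂‖^4) with hf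
  have hden : ∀ y : E3, ‖y‖ ≤ R → M^4 - (M-1)^4 ≤ M^4 - ‖y - u₂‖^4 := by
    intro y hy
    have h1 : ‖y - u₂‖ ≤ M - 1 := by linarith [hkey y hy]
    have h2 : ‖y - u₂‖^4 ≤ (M-1)^4 :=
      pow_le_pow_left₀ (norm_nonneg _) h1 4
    linarith
  have hMm1 : (0:ℝ) < M^4 - (M-1)^4 := by
    have := pow_lt_pow_left₀ (show M-1 < M by linarith) (show (0:ℝ) ≤ M-1 by linarith) (n := 4) (by norm_num)
    linarith
  have hfpos : ∀ y ∈ S, 0 ≤ f y := by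
    intro y hy
    have h1 : (0:ℝ) < M^4 - ‖y - u₂‖^4 := lt_of_lt_of_le hMm1 (hden y hy)
    exact div_nonneg hMpos.le h1.le
  have hint0 : 0 ≤ ∫ y in S, f y := setIntegral_nonneg hSmeas hfpos
  rcases le_or_gt R R₀ with hcase | hcase
  · -- trivial case: RHS of log ≤ 1, so LHS ≤ -2π² ≤ 0 ≤ integral
    have harg1 : 2 * (R - R₀) / (4 * R₀ + 2) ≤ 0 :=
      div_nonpos_iff.mpr (Or.inr ⟨by linarith, by linarith⟩)
    have harg0 : -1 < 2 * (R - R₀) / (4 * R₀ + 2) := by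
      rw [lt_div_iff₀ (by linarith : (0:ℝ) < 4 * R₀ + 2)]
      linarith
    have hlog : Real.log (1 + 2 * (R - R₀) / (4 * R₀ + 2)) ≤ 0 :=
      Real.log_nonpos (by linarith) (by linarith)
    nlinarith [Real.pi_pos, mul_nonpos_of_nonneg_of_nonpos Real.pi_pos.le hlog,
      sq_nonneg π]
  · set ρ : ℝ := R - R₀ with hρdef
    have hρpos : 0 < ρ := by linarith
    have hρM : ρ < M := by linarith
    have hsub : Metric.closedBall u₂ ρ ⊆ S := by
      intro y hy
      rw [Metric.mem_closedBall, dist_eq_norm] at hy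
      have h1 : ‖y‖ ≤ ‖y - u₂‖ + ‖u₂‖ := by
        calc ‖y‖ = ‖(y - u₂) + u₂‖ := by rw [sub_add_cancel]
          _ ≤ ‖y - u₂‖ + ‖u₂‖ := norm_add_le _ _
      simp only [hSdef, Set.mem_setOf_eq]
      linarith
    have hfmeas : Measurable f := by
      apply Measurable.div measurable_const
      apply Measurable.sub measurable_const
      exact ((measurable_id.sub measurable_const).norm.pow measurable_const)
    have hbound : ∀ᵐ y ∂(volume.restrict S), ‖f y‖ ≤ M / (M^4 - (M-1)^4) := by
      filter_upwards [ae_restrict_mem hSmeas] with y hy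
      have h1 := hden y hy
      have h2 := hfpos y hy
      rw [Real.norm_of_nonneg h2]
      apply div_le_div_of_nonneg_left hMpos.le hMm1
      linarith
    have hintOn : IntegrableOn f S volume :=
      Measure.integrableOn_of_bounded
        (by rw [hSeq]; exact measure_closedBall_lt_top.ne)
        hfmeas.aestronglyMeasurable hbound
    have hmono : ∫ y in Metric.closedBall u₂ ρ, f y ≤ ∫ y in S, f y := by
      apply setIntegral_mono_set hintOn
      · exact (ae_restrict_iff' hSmeas).2 (Filter.Eventually.of_forall hfpos)
      · exact Filter.Eventually.of_forall hsub
    have hball := ball_integral M ρ u₂ hMpos hρpos.le hρM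
    have hMub : M ≤ R + 3*R₀ + 2 := by
      have := norm_sub_le x u₁
      simp only [← hMdef] at this
      linarith
    -- key log comparison
    have hApos : (0:ℝ) < 1 + 2 * ρ / (4 * R₀ + 2) :=
      add_pos_of_pos_of_nonneg one_pos (div_nonneg (by linarith) (by linarith))
    have hAeq : 1 + 2 * ρ / (4 * R₀ + 2) = (4 * R₀ + 2 + 2 * ρ) / (4 * R₀ + 2) := by
      field_simp
    have hAle : 1 + 2 * ρ / (4 * R₀ + 2) ≤ (M + ρ) / (M - ρ) := by
      rw [hAeq, div_le_div_iff₀ (by linarith) (by linarith)]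
      nlinarith
    have hlogle : Real.log (1 + 2 * ρ / (4 * R₀ + 2)) ≤ Real.log (M + ρ) - Real.log (M - ρ) := by
      rw [← Real.log_div (by linarith : (0:ℝ) < M + ρ).ne' (by linarith : (0:ℝ) < M - ρ).ne']
      exact Real.log_le_log hApos hAle
    have harctan : Real.arctan (ρ/M) < π/2 := Real.arctan_lt_pi_div_two _
    have hfinal : π * Real.log (1 + 2 * (R - R₀) / (4 * R₀ + 2)) - 2 * π ^ 2 ≤
        π * (Real.log (M+ρ) - Real.log (M-ρ)) - 2*π*Real.arctan (ρ/M) := by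
      have h1 : π * Real.log (1 + 2 * ρ / (4 * R₀ + 2)) ≤
          π * (Real.log (M+ρ) - Real.log (M-ρ)) :=
        mul_le_mul_of_nonneg_left hlogle Real.pi_pos.le
      have h2 : 2*π*Real.arctan (ρ/M) ≤ 2*π*(π/2) := by
        have := Real.pi_pos
        nlinarith
      rw [← hρdef]
      nlinarith [sq_nonneg π]
    calc π * Real.log (1 + 2 * (R - R₀) / (4 * R₀ + 2)) - 2 * π ^ 2
        ≤ π * (Real.log (M+ρ) - Real.log (M-ρ)) - 2*π*Real.arctan (ρ/M) := hfinal
      _ = ∫ y in Metric.closedBall u₂ ρ, f y := hball.symm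
      _ ≤ ∫ y in S, f y := hmono
end
end

section
/- Let $R_0\ge 1$ and let $V:\mathbb{R}^3\to\mathbb{R}$ be integrable, not identically zero, with support in the ball $B(0,R_0)$. Define $\mathbb{G}(x,y)=\frac{-1-i}{4\pi\|V\|_{L^1}^2}\int_{\mathbb{R}^6}|V(u_1)V(u_2)|\,\frac{|x-u_1|\,\chi_{\{||x-u_1|-|y-u_2||\ge1\}}}{|x-u_1|^4-|y-u_2|^4}\,du_1du_2$ and $f_1=\chi_{B(0,1)}$. Then $\int_{3R_0+2\le |x|\le R}|T_{\mathbb{G}}f_1(x)|\,dx \gtrsim \ln\big(\frac{R}{3R_0+2}\big)$ for all large $R$; in particular $T_{\mathbb{G}}f_1\notin L^1(\mathbb{R}^3)$ and $T_{\mathbb{G}}$ is not bounded on $L^1(\mathbb{R}^3)$. -/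
open MeasureTheory Real
open scoped ENNReal NNReal

noncomputable section

lemma Fmeas {α : Type*} [MeasurableSpace α] (W : E3 → ℝ) (hW : Measurable W)
    (x y u₁ u₂ : α → E3) (hx : Measurable x) (hy : Measurable y)
    (hu₁ : Measurable u₁) (hu₂ : Measurable u₂) :
    Measurable (fun a : α => |W (u₁ a) * W (u₂ a)| * ‖x a - u₁ a‖ *
      (if (1 : ℝ) ≤ |‖x a - u₁ a‖ - ‖y a - u₂ a‖| then 1 else 0) /
        (‖x a - u₁ a‖ ^ 4 - ‖y a - u₂ a‖ ^ 4)) := by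
  have h1 : Measurable fun a : α => |W (u₁ a) * W (u₂ a)| :=
    ((hW.comp hu₁).mul (hW.comp hu₂)).abs
  have h2 : Measurable fun a : α => ‖x a - u₁ a‖ := (hx.sub hu₁).norm
  have h3 : Measurable fun a : α => ‖y a - u₂ a‖ := (hy.sub hu₂).norm
  have h4 : Measurable fun a : α =>
      (if (1 : ℝ) ≤ |‖x a - u₁ a‖ - ‖y a - u₂ a‖| then (1:ℝ) else 0) := by
    refine Measurable.ite ?_ measurable_const measurable_const
    exact measurableSet_le measurable_const (h2.sub h3).abs
  exact ((h1.mul h2).mul h4).div ((h2.pow_const 4).sub (h3.pow_const 4))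

set_option maxHeartbeats 1000000 in
open Complex in
/-- Unboundedness on `L¹` of the main singular part `T_𝔾` of the low-energy wave operator:
for a compactly supported nontrivial `V`, `T_𝔾 f₁` (with `f₁ = χ_{B(0,1)}`) has logarithmically
divergent `L¹` mass on large shells, hence is not integrable. -/
theorem TG_not_L1 (R₀ : ℝ) (hR₀ : 1 ≤ R₀) (V : E3 → ℝ)
    (hV : Integrable V volume) (hsupp : ∀ x : E3, R₀ < ‖x‖ → V x = 0)
    (hne : (0 : ℝ) < ∫ x : E3, |V x|)
    (𝔾 : E3 → E3 → ℂ)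
    (h𝔾 : ∀ x y : E3, 𝔾 x y =
      ((-1 - Complex.I) / (4 * (π : ℂ) * ((∫ u : E3, |V u| : ℝ) : ℂ) ^ 2)) *
        ((∫ u : E3 × E3,
            |V u.1 * V u.2| * ‖x - u.1‖ * (if (1 : ℝ) ≤ |‖x - u.1‖ - ‖y - u.2‖| then 1 else 0) /
              (‖x - u.1‖ ^ 4 - ‖y - u.2‖ ^ 4) : ℝ) : ℂ))
    (Tf₁ : E3 → ℂ)
    (hTf₁ : ∀ x : E3, Tf₁ x = ∫ y in {y : E3 | ‖y‖ ≤ 1}, 𝔾 x y) :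
    (∃ c : ℝ, 0 < c ∧ ∃ R₁ : ℝ, ∀ R : ℝ, R₁ ≤ R →
      c * Real.log (R / (3 * R₀ + 2)) ≤
        ∫ x in {x : E3 | 3 * R₀ + 2 ≤ ‖x‖ ∧ ‖x‖ ≤ R}, ‖Tf₁ x‖) ∧
    ¬ Integrable Tf₁ volume := by
  classical
  haveI hOMS : OpensMeasurableSpace ((E3 × E3) × (E3 × E3)) := Prod.opensMeasurableSpace
  set M : ℝ := ∫ x : E3, |V x| with hM
  set A : ℝ := 3 * R₀ + 2 with hA
  have hA5 : (5 : ℝ) ≤ A := by rw [hA]; linarith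
  -- measurable representative of V with pointwise support condition
  obtain ⟨V', hV'm, hVV'⟩ := hV.aestronglyMeasurable
  set W : E3 → ℝ := fun v => if ‖v‖ ≤ R₀ then V' v else 0 with hWdef
  have hWm : Measurable W := by
    refine Measurable.ite ?_ hV'm.measurable measurable_const
    exact measurableSet_le measurable_norm measurable_const
  have hWV : ∀ᵐ v ∂(volume : Measure E3), V v = W v := by
    filter_upwards [hVV'] with v hv
    by_cases h : ‖v‖ ≤ R₀
    · simp [hWdef, h, hv]
    · simp [hWdef, h, hsupp v (lt_of_not_ge h)]
  have hWsupp : ∀ v : E3, R₀ < ‖v‖ → W v = 0 := by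
    intro v hv
    simp [hWdef, not_le.2 hv]
  have hWint : Integrable W volume := hV.congr hWV
  have hMW : ∫ v : E3, |W v| = M := by
    rw [hM]
    refine integral_congr_ae ?_
    filter_upwards [hWV] with v hv using by rw [hv]
  have hM0 : 0 < M := hne
  -- the (measurable) inner integrand
  set F : E3 → E3 → E3 × E3 → ℝ := fun x y u =>
    |W u.1 * W u.2| * ‖x - u.1‖ * (if (1 : ℝ) ≤ |‖x - u.1‖ - ‖y - u.2‖| then 1 else 0) /
      (‖x - u.1‖ ^ 4 - ‖y - u.2‖ ^ 4) with hFdef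
  have hGm : Measurable (fun p : (E3 × E3) × (E3 × E3) => F p.1.1 p.1.2 p.2) :=
    Fmeas W hWm _ _ _ _ (measurable_fst.comp measurable_fst) (measurable_snd.comp measurable_fst)
      (measurable_fst.comp measurable_snd) (measurable_snd.comp measurable_snd)
  have hFm : ∀ x y : E3, Measurable (F x y) := fun x y =>
    Fmeas W hWm _ _ _ _ measurable_const measurable_const measurable_fst measurable_snd
  have hFm2 : ∀ x : E3, Measurable (fun q : E3 × (E3 × E3) => F x q.1 q.2) := fun x =>
    Fmeas W hWm _ _ _ _ measurable_const measurable_fst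
      (measurable_fst.comp measurable_snd) (measurable_snd.comp measurable_snd)
  -- pointwise bounds
  have key : ∀ x y : E3, A ≤ ‖x‖ → ‖y‖ ≤ 1 → ∀ u : E3 × E3,
      (27 / 64) / ‖x‖ ^ 3 * |W u.1 * W u.2| ≤ F x y u ∧
        F x y u ≤ (16 / 15) * |W u.1 * W u.2| := by
    intro x y hx hy u
    have hX5 : (5:ℝ) ≤ ‖x‖ := le_trans hA5 hx
    have hX0 : (0:ℝ) < ‖x‖ := by linarith
    by_cases h0 : W u.1 * W u.2 = 0
    · constructor
      · simp only [hFdef, h0, abs_zero, mul_zero, zero_mul, zero_div, le_refl]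
      · simp only [hFdef, h0, abs_zero, mul_zero, zero_mul, zero_div, le_refl]
    · have h1 : W u.1 ≠ 0 := fun h => h0 (by rw [h, zero_mul])
      have h2 : W u.2 ≠ 0 := fun h => h0 (by rw [h, mul_zero])
      have hu1 : ‖u.1‖ ≤ R₀ := le_of_not_gt fun h => h1 (hWsupp _ h)
      have hu2 : ‖u.2‖ ≤ R₀ := le_of_not_gt fun h => h2 (hWsupp _ h)
      have hRX : 3 * R₀ + 2 ≤ ‖x‖ := by rw [hA] at hx; exact hx
      have ha1 : ‖x‖ - R₀ ≤ ‖x - u.1‖ := by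
        have := norm_sub_norm_le x u.1
        linarith [this, hu1]
      have ha2 : ‖x - u.1‖ ≤ ‖x‖ + R₀ := le_trans (norm_sub_le x u.1) (by linarith)
      have hb1 : ‖y - u.2‖ ≤ 1 + R₀ := le_trans (norm_sub_le y u.2) (by linarith)
      set a : ℝ := ‖x - u.1‖ with haa
      set b' : ℝ := ‖y - u.2‖ with hbb
      have halow : (2 * ‖x‖ + 2) / 3 ≤ a := by linarith
      have hahigh : a ≤ 4 / 3 * ‖x‖ := by linarith
      have ha2' : (2:ℝ) ≤ a := by linarith
      have ha0 : (0:ℝ) < a := by linarith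
      have hb2 : b' ≤ a / 2 := by linarith
      have hb0 : (0:ℝ) ≤ b' := norm_nonneg _
      have hba : (1:ℝ) ≤ a - b' := by linarith
      have hind : (1:ℝ) ≤ |a - b'| := le_trans hba (le_abs_self _)
      have hb4 : b' ^ 4 ≤ (a / 2) ^ 4 := pow_le_pow_left₀ hb0 hb2 4
      have haux : (a / 2) ^ 4 = a ^ 4 / 16 := by ring
      have ha4 : (0:ℝ) < a ^ 4 := by positivity
      have hden_lb : 15 / 16 * a ^ 4 ≤ a ^ 4 - b' ^ 4 := by
        rw [haux] at hb4; linarith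
      have hden_ub : a ^ 4 - b' ^ 4 ≤ a ^ 4 := by
        have : (0:ℝ) ≤ b' ^ 4 := by positivity
        linarith
      have hden_pos : (0:ℝ) < a ^ 4 - b' ^ 4 := by linarith
      have hFval : F x y u = |W u.1 * W u.2| * a / (a ^ 4 - b' ^ 4) := by
        simp only [hFdef, ← haa, ← hbb, if_pos hind, mul_one]
      set q : ℝ := |W u.1 * W u.2| with hq
      have hq0 : (0:ℝ) ≤ q := abs_nonneg _
      rw [hFval]
      constructor
      · have s1 : q * a / a ^ 4 ≤ q * a / (a ^ 4 - b' ^ 4) :=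
          div_le_div_of_nonneg_left (by positivity) hden_pos hden_ub
        have s2 : q * a / a ^ 4 = q / a ^ 3 := by
          field_simp
        have s3 : q / (4 / 3 * ‖x‖) ^ 3 ≤ q / a ^ 3 := by
          apply div_le_div_of_nonneg_left hq0 (by positivity)
          exact pow_le_pow_left₀ ha0.le hahigh 3
        have s4 : 27 / 64 / ‖x‖ ^ 3 * q = q / (4 / 3 * ‖x‖) ^ 3 := by
          field_simp; ring
        rw [s4]
        exact le_trans s3 (by rw [← s2]; exact s1)
      · have s5 : q * a / (a ^ 4 - b' ^ 4) ≤ q * a / (15 / 16 * a ^ 4) :=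
          div_le_div_of_nonneg_left (by positivity) (by positivity) hden_lb
        have s6 : q * a / (15 / 16 * a ^ 4) = 16 / 15 * q * (1 / a ^ 3) := by
          field_simp
        have s7 : (1:ℝ) / a ^ 3 ≤ 1 := by
          rw [div_le_one (by positivity)]
          nlinarith [sq_nonneg (a - 2), sq_nonneg a, ha2']
        calc q * a / (a ^ 4 - b' ^ 4) ≤ 16 / 15 * q * (1 / a ^ 3) := by rw [← s6]; exact s5
          _ ≤ 16 / 15 * q * 1 := by
              exact mul_le_mul_of_nonneg_left s7 (by positivity)
          _ = 16 / 15 * q := mul_one _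
  -- integrability of |W u.1 * W u.2|
  have hGint : Integrable (fun u : E3 × E3 => |W u.1 * W u.2|) volume := by
    rw [Measure.volume_eq_prod]
    have := (hWint.abs).mul_prod (hWint.abs)
    refine this.congr (ae_of_all _ fun u => ?_)
    exact (abs_mul _ _).symm
  have hGval : ∫ u : E3 × E3, |W u.1 * W u.2| = M ^ 2 := by
    have h1 : ∫ u : E3 × E3, |W u.1 * W u.2| = ∫ u : E3 × E3, |W u.1| * |W u.2| := by
      congr 1; funext u; exact abs_mul _ _
    rw [h1, Measure.volume_eq_prod]
    rw [show (∫ u : E3 × E3, |W u.1| * |W u.2| ∂(volume : Measure E3).prod volume)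
        = (∫ v : E3, |W v|) * ∫ v : E3, |W v| from integral_prod_mul (fun v => |W v|) (fun v => |W v|), hMW]
    ring
  -- integrability of F x y
  have hFint : ∀ x y : E3, A ≤ ‖x‖ → ‖y‖ ≤ 1 → Integrable (F x y) volume := by
    intro x y hx hy
    refine (hGint.const_mul (16 / 15)).mono ?_ (ae_of_all _ fun u => ?_)
    · exact (hFm x y).aestronglyMeasurable
    · have h0 : 0 ≤ F x y u := le_trans (by positivity) ((key x y hx hy u).1)
      rw [Real.norm_eq_abs, _root_.abs_of_nonneg h0, Real.norm_eq_abs]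
      exact le_trans ((key x y hx hy u).2) (le_abs_self _)
  set I : E3 → E3 → ℝ := fun x y => ∫ u : E3 × E3, F x y u with hIdef
  have hIlb : ∀ x y : E3, A ≤ ‖x‖ → ‖y‖ ≤ 1 → (27 / 64) / ‖x‖ ^ 3 * M ^ 2 ≤ I x y := by
    intro x y hx hy
    have h1 : ∫ u : E3 × E3, (27 / 64) / ‖x‖ ^ 3 * |W u.1 * W u.2|
        = (27 / 64) / ‖x‖ ^ 3 * M ^ 2 := by rw [integral_const_mul, hGval]
    rw [← h1]
    exact integral_mono (hGint.const_mul _) (hFint x y hx hy) (fun u => (key x y hx hy u).1)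
  have hIub : ∀ x y : E3, A ≤ ‖x‖ → ‖y‖ ≤ 1 → I x y ≤ (16 / 15) * M ^ 2 := by
    intro x y hx hy
    have h1 : ∫ u : E3 × E3, (16 / 15) * |W u.1 * W u.2| = (16 / 15) * M ^ 2 := by
      rw [integral_const_mul, hGval]
    rw [← h1]
    exact integral_mono (hFint x y hx hy) (hGint.const_mul _) (fun u => (key x y hx hy u).2)
  -- rewrite 𝔾 using W
  set C : ℂ := (-1 - Complex.I) / (4 * (π : ℂ) * (M : ℂ) ^ 2) with hCdef
  have h𝔾' : ∀ x y : E3, 𝔾 x y = C * (I x y : ℂ) := by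
    intro x y
    rw [h𝔾 x y]
    have hN : volume {v : E3 | ¬ V v = W v} = 0 := ae_iff.1 hWV
    have h1 : ∀ᵐ u : E3 × E3 ∂(volume : Measure (E3 × E3)), V u.1 = W u.1 := by
      rw [ae_iff]
      refine measure_mono_null (t := {v : E3 | ¬ V v = W v} ×ˢ (Set.univ : Set E3))
        (fun u hu => Set.mem_prod.2 ⟨hu, Set.mem_univ _⟩) ?_
      rw [Measure.volume_eq_prod, Measure.prod_prod, hN, zero_mul]
    have h2 : ∀ᵐ u : E3 × E3 ∂(volume : Measure (E3 × E3)), V u.2 = W u.2 := by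
      rw [ae_iff]
      refine measure_mono_null (t := (Set.univ : Set E3) ×ˢ {v : E3 | ¬ V v = W v})
        (fun u hu => Set.mem_prod.2 ⟨Set.mem_univ _, hu⟩) ?_
      rw [Measure.volume_eq_prod, Measure.prod_prod, hN, mul_zero]
    have heq : ∫ u : E3 × E3,
        |V u.1 * V u.2| * ‖x - u.1‖ * (if (1 : ℝ) ≤ |‖x - u.1‖ - ‖y - u.2‖| then 1 else 0) /
          (‖x - u.1‖ ^ 4 - ‖y - u.2‖ ^ 4) = I x y := by
      simp only [hIdef]
      refine integral_congr_ae ?_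
      filter_upwards [h1, h2] with u e1 e2
      simp only [hFdef, e1, e2]
    rw [heq]
  -- the ball B₁ and its properties
  set B₁ : Set E3 := {y : E3 | ‖y‖ ≤ 1} with hB₁def
  have hB₁eq : B₁ = Metric.closedBall (0 : E3) 1 := by
    ext y; simp [hB₁def, Metric.mem_closedBall, dist_eq_norm]
  have hB₁meas : MeasurableSet B₁ := by
    rw [hB₁eq]; exact Metric.isClosed_closedBall.measurableSet
  have hB₁fin : volume B₁ ≠ ∞ := by
    rw [hB₁eq]; exact measure_closedBall_lt_top.ne
  set b : ℝ := (volume B₁).toReal with hbdef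
  have hb0 : 0 < b := by
    rw [hbdef, ENNReal.toReal_pos_iff]
    refine ⟨?_, lt_top_iff_ne_top.2 hB₁fin⟩
    rw [hB₁eq]; exact Metric.measure_closedBall_pos _ _ one_pos
  -- strong measurability of I and J
  have hIsm : StronglyMeasurable (fun p : E3 × E3 => I p.1 p.2) := by
    have : StronglyMeasurable (fun p : (E3 × E3) × (E3 × E3) => F p.1.1 p.1.2 p.2) :=
      hGm.stronglyMeasurable
    exact this.integral_prod_right'
  set J : E3 → ℝ := fun x => ∫ y in B₁, I x y with hJdef
  have hJsm : StronglyMeasurable J :=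
    hIsm.integral_prod_right' (ν := volume.restrict B₁)
  have hIintOn : ∀ x : E3, A ≤ ‖x‖ → IntegrableOn (I x) B₁ volume := by
    intro x hx
    refine Measure.integrableOn_of_bounded (M := (16 / 15) * M ^ 2) hB₁fin
      (((hFm2 x).stronglyMeasurable.integral_prod_right' : StronglyMeasurable (fun y => ∫ u : E3 × E3, F x y u)).aestronglyMeasurable) ?_
    rw [ae_restrict_iff' hB₁meas]
    refine ae_of_all _ fun y hy => ?_
    have hy1 : ‖y‖ ≤ 1 := hy
    have h0 : 0 ≤ I x y := le_trans (by positivity) (hIlb x y hx hy1)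
    rw [Real.norm_eq_abs, _root_.abs_of_nonneg h0]
    exact hIub x y hx hy1
  have hJlb : ∀ x : E3, A ≤ ‖x‖ → (27 / 64) / ‖x‖ ^ 3 * M ^ 2 * b ≤ J x := by
    intro x hx
    exact setIntegral_ge_of_const_le_real hB₁meas hB₁fin (fun y hy => hIlb x y hx hy) (hIintOn x hx)
  have hJub : ∀ x : E3, A ≤ ‖x‖ → J x ≤ (16 / 15) * M ^ 2 * b := by
    intro x hx
    have h1 : ∫ (_ : E3) in B₁, ((16 / 15) * M ^ 2 : ℝ) = (16 / 15) * M ^ 2 * b := by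
      rw [setIntegral_const, smul_eq_mul, hbdef, measureReal_def]; ring
    rw [← h1]
    refine setIntegral_mono_on (hIintOn x hx) ((integrableOn_const_iff).2 (Or.inr ?_)) hB₁meas
      (fun y hy => hIub x y hx hy)
    exact lt_top_iff_ne_top.2 hB₁fin
  -- formula for Tf₁
  have hTf : ∀ x : E3, Tf₁ x = C * (J x : ℂ) := by
    intro x
    rw [hTf₁ x]
    calc ∫ y in B₁, 𝔾 x y = ∫ y in B₁, C * (I x y : ℂ) :=
          setIntegral_congr_fun hB₁meas fun y _ => h𝔾' x y
      _ = C * ∫ y in B₁, (I x y : ℂ) := integral_const_mul _ _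
      _ = C * (J x : ℂ) := by
          congr 1
          exact (integral_ofReal (𝕜 := ℂ) (f := fun y => I x y) (μ := volume.restrict B₁))
  have hC0 : C ≠ 0 := by
    rw [hCdef]
    apply div_ne_zero
    · intro h
      have := congrArg Complex.im h
      simp at this
    · refine mul_ne_zero (mul_ne_zero (by norm_num) ?_) (pow_ne_zero _ ?_)
      · exact_mod_cast Real.pi_ne_zero
      · exact_mod_cast hM0.ne'
  have hCn : 0 < ‖C‖ := norm_pos_iff.2 hC0
  -- pointwise bounds for ‖Tf₁‖
  set c₁ : ℝ := ‖C‖ * ((27 / 64) * M ^ 2 * b) with hc₁def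
  set K : ℝ := ‖C‖ * ((16 / 15) * M ^ 2 * b) with hKdef
  have hc₁0 : 0 < c₁ := by positivity
  have hJ0 : ∀ x : E3, A ≤ ‖x‖ → 0 ≤ J x := by
    intro x hx
    exact le_trans (by positivity) (hJlb x hx)
  have hTnorm : ∀ x : E3, A ≤ ‖x‖ → ‖Tf₁ x‖ = ‖C‖ * J x := by
    intro x hx
    rw [hTf x, norm_mul, Complex.norm_real, Real.norm_eq_abs, _root_.abs_of_nonneg (hJ0 x hx)]
  have hTlb : ∀ x : E3, A ≤ ‖x‖ → c₁ / ‖x‖ ^ 3 ≤ ‖Tf₁ x‖ := by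
    intro x hx
    rw [hTnorm x hx, hc₁def]
    have := hJlb x hx
    have hx0 : (0:ℝ) < ‖x‖ := lt_of_lt_of_le (by linarith) hx
    calc ‖C‖ * ((27 / 64) * M ^ 2 * b) / ‖x‖ ^ 3
        = ‖C‖ * ((27 / 64) / ‖x‖ ^ 3 * M ^ 2 * b) := by field_simp
      _ ≤ ‖C‖ * J x := by
          exact mul_le_mul_of_nonneg_left this (norm_nonneg _)
  have hTub : ∀ x : E3, A ≤ ‖x‖ → ‖Tf₁ x‖ ≤ K := by
    intro x hx
    rw [hTnorm x hx, hKdef]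
    exact mul_le_mul_of_nonneg_left (hJub x hx) (norm_nonneg _)
  -- the shell sets
  have hSmeas : ∀ R : ℝ, MeasurableSet {x : E3 | A ≤ ‖x‖ ∧ ‖x‖ ≤ R} := by
    intro R
    exact (measurableSet_le measurable_const measurable_norm).inter
      (measurableSet_le measurable_norm measurable_const)
  have hSfin : ∀ R : ℝ, volume {x : E3 | A ≤ ‖x‖ ∧ ‖x‖ ≤ R} ≠ ∞ := by
    intro R
    refine (lt_of_le_of_lt (measure_mono ?_) (measure_closedBall_lt_top (x := (0:E3)) (r := R))).ne
    intro x hx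
    simpa [Metric.mem_closedBall, dist_eq_norm] using hx.2
  -- integrability of ‖Tf₁‖ on shells
  have hTmeas : ∀ R : ℝ, IntegrableOn (fun x => ‖Tf₁ x‖) {x : E3 | A ≤ ‖x‖ ∧ ‖x‖ ≤ R} volume := by
    intro R
    have hsm : StronglyMeasurable (fun x : E3 => ‖C * (J x : ℂ)‖) :=
      ((stronglyMeasurable_const.mul (Complex.continuous_ofReal.comp_stronglyMeasurable hJsm))).norm
    have haesm : AEStronglyMeasurable (fun x => ‖Tf₁ x‖)
        (volume.restrict {x : E3 | A ≤ ‖x‖ ∧ ‖x‖ ≤ R}) := by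
      refine hsm.aestronglyMeasurable.congr ?_
      filter_upwards [ae_restrict_mem (hSmeas R)] with x hx
      rw [hTf x]
    refine ⟨haesm, HasFiniteIntegral.restrict_of_bounded (C := K) (lt_top_iff_ne_top.2 (hSfin R)) ?_⟩
    rw [ae_restrict_iff' (hSmeas R)]
    refine ae_of_all _ fun x hx => ?_
    rw [Real.norm_eq_abs, _root_.abs_of_nonneg (norm_nonneg _)]
    exact hTub x hx.1
  -- lower bound for the shell integral of ‖x‖⁻³
  have hshell : ∀ R : ℝ, A ≤ R →
      ∫ x in {x : E3 | A ≤ ‖x‖ ∧ ‖x‖ ≤ R}, (‖x‖ ^ 3)⁻¹ =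
        3 * (volume (Metric.ball (0 : E3) 1)).toReal * Real.log (R / A) := by
    intro R hAR
    have h0A : (0:ℝ) < A := by linarith
    set g : ℝ → ℝ := Set.indicator (Set.Icc A R) (fun r => (r ^ 3)⁻¹) with hg
    have h1 : ∫ x in {x : E3 | A ≤ ‖x‖ ∧ ‖x‖ ≤ R}, (‖x‖ ^ 3)⁻¹ = ∫ x : E3, g ‖x‖ := by
      rw [← integral_indicator (hSmeas R)]
      refine integral_congr_ae (ae_of_all _ fun x => ?_)
      by_cases hx : A ≤ ‖x‖ ∧ ‖x‖ ≤ R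
      · rw [Set.indicator_of_mem (show x ∈ {x : E3 | A ≤ ‖x‖ ∧ ‖x‖ ≤ R} from hx)]
        exact (Set.indicator_of_mem (Set.mem_Icc.2 hx) (fun r : ℝ => (r ^ 3)⁻¹)).symm
      · rw [Set.indicator_of_notMem (show x ∉ {x : E3 | A ≤ ‖x‖ ∧ ‖x‖ ≤ R} from hx)]
        exact (Set.indicator_of_notMem (fun h => hx (Set.mem_Icc.1 h)) (fun r : ℝ => (r ^ 3)⁻¹)).symm
    have h2 : ∫ x : E3, g ‖x‖ =
        3 • (volume (Metric.ball (0:E3) 1)).toReal • ∫ r in Set.Ioi (0:ℝ), r ^ 2 • g r := by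
      have h := integral_fun_norm_addHaar (volume : Measure E3) g
      rw [h]
      norm_num [finrank_euclideanSpace_fin, measureReal_def]
    have h3 : ∫ r in Set.Ioi (0:ℝ), r ^ 2 • g r
        = ∫ r in Set.Ioi (0:ℝ), Set.indicator (Set.Icc A R) (fun s => s⁻¹) r := by
      refine setIntegral_congr_fun measurableSet_Ioi fun r hr => ?_
      have hr0 : (0:ℝ) < r := hr
      by_cases h : r ∈ Set.Icc A R
      · rw [hg, Set.indicator_of_mem h, Set.indicator_of_mem h, smul_eq_mul]
        field_simp
      · rw [hg, Set.indicator_of_notMem h, Set.indicator_of_notMem h, smul_zero]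
    have h5 : ∫ r in Set.Ioi (0:ℝ), Set.indicator (Set.Icc A R) (fun s => s⁻¹) r
        = ∫ r in Set.Ioi 0 ∩ Set.Icc A R, r⁻¹ := setIntegral_indicator measurableSet_Icc
    have h6 : Set.Ioi (0:ℝ) ∩ Set.Icc A R = Set.Icc A R :=
      Set.inter_eq_self_of_subset_right (fun r hr => lt_of_lt_of_le h0A hr.1)
    have h7 : ∫ r in Set.Icc A R, r⁻¹ = Real.log (R / A) := by
      rw [integral_Icc_eq_integral_Ioc, ← intervalIntegral.integral_of_le hAR]
      exact integral_inv_of_pos h0A (lt_of_lt_of_le h0A hAR)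
    rw [h1, h2, h3, h5, h6, h7, nsmul_eq_mul, smul_eq_mul]
    push_cast
    ring
  -- final assembly
  set v3 : ℝ := (volume (Metric.ball (0:E3) 1)).toReal with hv3def
  have hv3 : 0 < v3 := ENNReal.toReal_pos (Metric.measure_ball_pos _ _ one_pos).ne'
    measure_ball_lt_top.ne
  set c : ℝ := c₁ * (3 * v3) with hcdef
  have hc0 : 0 < c := by positivity
  have h0A : (0:ℝ) < A := by linarith
  have main : ∀ R : ℝ, A ≤ R →
      c * Real.log (R / A) ≤ ∫ x in {x : E3 | A ≤ ‖x‖ ∧ ‖x‖ ≤ R}, ‖Tf₁ x‖ := by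
    intro R hAR
    have hinv : IntegrableOn (fun x : E3 => c₁ * (‖x‖ ^ 3)⁻¹) {x : E3 | A ≤ ‖x‖ ∧ ‖x‖ ≤ R}
        volume := by
      refine ⟨((measurable_const.mul ((measurable_norm.pow_const 3).inv))).aestronglyMeasurable,
        HasFiniteIntegral.restrict_of_bounded (C := c₁ * (A ^ 3)⁻¹)
          (lt_top_iff_ne_top.2 (hSfin R)) ?_⟩
      rw [ae_restrict_iff' (hSmeas R)]
      refine ae_of_all _ fun x hx => ?_
      have hxA : A ≤ ‖x‖ := hx.1
      have hx0 : (0:ℝ) < ‖x‖ := lt_of_lt_of_le h0A hxA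
      rw [Real.norm_eq_abs, _root_.abs_of_nonneg (by positivity)]
      have : (‖x‖ ^ 3)⁻¹ ≤ (A ^ 3)⁻¹ := by
        apply inv_anti₀ (by positivity)
        exact pow_le_pow_left₀ h0A.le hxA 3
      exact mul_le_mul_of_nonneg_left this hc₁0.le
    have step : ∫ x in {x : E3 | A ≤ ‖x‖ ∧ ‖x‖ ≤ R}, c₁ * (‖x‖ ^ 3)⁻¹
        ≤ ∫ x in {x : E3 | A ≤ ‖x‖ ∧ ‖x‖ ≤ R}, ‖Tf₁ x‖ := by
      refine setIntegral_mono_on hinv (hTmeas R) (hSmeas R) (fun x hx => ?_)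
      have := hTlb x hx.1
      rwa [div_eq_mul_inv] at this
    have comp : ∫ x in {x : E3 | A ≤ ‖x‖ ∧ ‖x‖ ≤ R}, c₁ * (‖x‖ ^ 3)⁻¹
        = c₁ * ∫ x in {x : E3 | A ≤ ‖x‖ ∧ ‖x‖ ≤ R}, (‖x‖ ^ 3)⁻¹ := integral_const_mul _ _
    rw [comp, hshell R hAR] at step
    calc c * Real.log (R / A) = c₁ * (3 * v3 * Real.log (R / A)) := by
          rw [hcdef]; ring
      _ ≤ _ := step
  constructor
  · exact ⟨c, hc0, A, main⟩
  · intro hInt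
    set T : ℝ := ∫ x : E3, ‖Tf₁ x‖ with hT
    have hTub' : ∀ R : ℝ, ∫ x in {x : E3 | A ≤ ‖x‖ ∧ ‖x‖ ≤ R}, ‖Tf₁ x‖ ≤ T :=
      fun R => setIntegral_le_integral hInt.norm (ae_of_all _ fun x => norm_nonneg _)
    set R : ℝ := max A (A * Real.exp ((T + 1) / c)) with hRdef
    have hR : A ≤ R := le_max_left _ _
    have hlog : (T + 1) / c ≤ Real.log (R / A) := by
      rw [Real.le_log_iff_exp_le (by positivity)]
      rw [le_div_iff₀ h0A]
      calc Real.exp ((T + 1) / c) * A = A * Real.exp ((T + 1) / c) := mul_comm _ _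
        _ ≤ R := le_max_right _ _
    have h1 : T + 1 ≤ c * Real.log (R / A) := by
      have := (div_le_iff₀ hc0).1 hlog
      linarith
    have h2 := main R hR
    have h3 := hTub' R
    linarith
end
end
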